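/- arXiv:1810.12861 — 8 statements merged into one kernel-verified Lean document; each statement's English description precedes it below -/
import Mathlib

section
/- Let N be a finite ground set, (N, 𝓜) a matroid of rank K, Z a monotone, submodular, normalized set function on N, and g a greedy sequence for (Z, 𝓜) with output G. Then for every Ω ∈ 𝓜 one has 2·Z(G) ≥ Z(Ω); equivalently, Z(G)/Z(Ω) ≥ 1/2 whenever Z(Ω) > 0. -/
open Finset

/-- Marginal gain of adding `q` to `S`: `ρ_q(S) = Z(S ∪ {q}) − Z(S)`. -/
def marg {α : Type*} [DecidableEq α] (Z : Finset α → ℝ) (q : α) (S : Finset α) : ℝ :=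
  Z (insert q S) - Z S

/-- The set `{g 1, …, g i}` of the first `i` elements of the sequence `g`. -/
def initSeg {α : Type*} [DecidableEq α] (g : ℕ → α) (i : ℕ) : Finset α :=
  (Finset.Icc 1 i).image g

lemma initSeg_zero {α : Type*} [DecidableEq α] (g : ℕ → α) : initSeg g 0 = ∅ := by
  simp [initSeg]

lemma initSeg_mono {α : Type*} [DecidableEq α] (g : ℕ → α) {i j : ℕ} (h : i ≤ j) :
    initSeg g i ⊆ initSeg g j :=
  Finset.image_subset_image (Finset.Icc_subset_Icc_right h)

lemma initSeg_succ {α : Type*} [DecidableEq α] (g : ℕ → α) (i : ℕ) :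
    initSeg g (i + 1) = insert (g (i + 1)) (initSeg g i) := by
  unfold initSeg
  rw [← Finset.insert_Icc_right_eq_Icc_add_one (by omega : 1 ≤ i + 1), Finset.image_insert]

lemma initSeg_card_le {α : Type*} [DecidableEq α] (g : ℕ → α) (i : ℕ) :
    (initSeg g i).card ≤ i := by
  calc (initSeg g i).card ≤ (Finset.Icc 1 i).card := Finset.card_image_le
  _ = i := by rw [Nat.card_Icc]; omega

lemma sum_marg_eq {α : Type*} [DecidableEq α] (Z : Finset α → ℝ) (g : ℕ → α) (K : ℕ) :
    ∑ i ∈ Finset.Icc 1 K, marg Z (g i) (initSeg g (i - 1)) = Z (initSeg g K) - Z ∅ := by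
  induction K with
  | zero => simp [initSeg_zero]
  | succ K ih =>
      rw [← Finset.insert_Icc_right_eq_Icc_add_one (by omega : 1 ≤ K + 1), Finset.sum_insert (by simp)]
      rw [ih]
      have : (K + 1) - 1 = K := by omega
      rw [this, marg, ← initSeg_succ]
      ring

lemma union_marg_bound {α : Type*} [DecidableEq α] (N : Finset α) (Z : Finset α → ℝ)
    (hZ_mono : ∀ S T : Finset α, S ⊆ T → T ⊆ N → Z S ≤ Z T)
    (hZ_submod : ∀ S T : Finset α, ∀ x, S ⊆ T → T ⊆ N → x ∈ N → x ∉ T →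
      Z (insert x T) - Z T ≤ Z (insert x S) - Z S) :
    ∀ S G : Finset α, G ⊆ N → S ⊆ N → (∀ a ∈ S, a ∉ G) →
      Z (G ∪ S) ≤ Z G + ∑ q ∈ S, marg Z q G := by
  intro S
  induction S using Finset.induction_on with
  | empty => intro G hG _ _; simp
  | @insert a S haS ih =>
      intro G hG hSN hdisj
      have hSN' : S ⊆ N := fun x hx => hSN (Finset.mem_insert_of_mem hx)
      have haN : a ∈ N := hSN (Finset.mem_insert_self a S)
      have hGS : G ∪ S ⊆ N := Finset.union_subset hG hSN'
      have haGS : a ∉ G ∪ S := by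
        simp only [Finset.mem_union]
        rintro (h | h)
        · exact hdisj a (Finset.mem_insert_self a S) h
        · exact haS h
      have h1 : Z (G ∪ insert a S) - Z (G ∪ S) ≤ marg Z a G := by
        have : G ∪ insert a S = insert a (G ∪ S) := by
          ext x
          simp only [Finset.mem_union, Finset.mem_insert]
          tauto
        rw [this, marg]
        exact hZ_submod G (G ∪ S) a Finset.subset_union_left hGS haN haGS
      have h2 := ih G hG hSN' (fun x hx => hdisj x (Finset.mem_insert_of_mem hx))
      rw [Finset.sum_insert haS]
      linarith

/-- The greedy algorithm is a 1/2-approximation for monotone submodular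
maximization over a matroid: `Z(Ω) ≤ 2·Z(G)` for every `Ω ∈ 𝓜`. -/
theorem greedy_half_approx {α : Type*} [DecidableEq α]
    (N : Finset α) (M : Finset α → Prop)
    (hM_ground : ∀ S, M S → S ⊆ N) (hM_empty : M ∅)
    (hM_down : ∀ S T : Finset α, M T → S ⊆ T → M S)
    (hM_aug : ∀ S T : Finset α, M S → M T → S.card < T.card → ∃ x ∈ T \ S, M (insert x S))
    (K : ℕ) (hK_le : ∀ S, M S → S.card ≤ K) (hK_ex : ∃ B, M B ∧ B.card = K)
    (Z : Finset α → ℝ)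
    (hZ_mono : ∀ S T : Finset α, S ⊆ T → T ⊆ N → Z S ≤ Z T)
    (hZ_submod : ∀ S T : Finset α, ∀ x, S ⊆ T → T ⊆ N → x ∈ N → x ∉ T →
      Z (insert x T) - Z T ≤ Z (insert x S) - Z S)
    (hZ_empty : Z ∅ = 0)
    (g : ℕ → α) (hg_inj : Set.InjOn g (Set.Icc 1 K)) (hG_M : M (initSeg g K))
    (hg_max : ∀ i ∈ Finset.Icc 1 K, ∀ x ∈ N, x ∉ initSeg g (i - 1) →
      M (insert x (initSeg g (i - 1))) →
      marg Z x (initSeg g (i - 1)) ≤ marg Z (g i) (initSeg g (i - 1)))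
 :
    ∀ Ω : Finset α, M Ω → Z Ω ≤ 2 * Z (initSeg g K) := by
  classical
  intro Ω hΩ
  set G := initSeg g K with hGdef
  have hGN : G ⊆ N := hM_ground _ hG_M
  have hΩN : Ω ⊆ N := hM_ground _ hΩ
  have hGcard : G.card = K := by
    rw [hGdef, initSeg, Finset.card_image_of_injOn (by rwa [Finset.coe_Icc]),
      Nat.card_Icc]
    omega
  -- counting lemma: at most `i` elements of Ω fail to extend `initSeg g i`
  have hcount : ∀ i ≤ K,
      (Ω.filter (fun q => ¬ M (insert q (initSeg g i)))).card ≤ i := by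
    intro i hiK
    by_contra hlt
    push_neg at hlt
    have hA : M (Ω.filter (fun q => ¬ M (insert q (initSeg g i)))) :=
      hM_down _ _ hΩ (Finset.filter_subset _ _)
    have hI : M (initSeg g i) := hM_down _ _ hG_M (initSeg_mono g hiK)
    obtain ⟨x, hx, hxM⟩ :=
      hM_aug _ _ hI hA (lt_of_le_of_lt (initSeg_card_le g i) hlt)
    rw [Finset.mem_sdiff] at hx
    exact (Finset.mem_filter.mp hx.1).2 hxM
  -- dependence at step K for q outside G
  have hdepK : ∀ q ∈ Ω \ G, ¬ M (insert q (initSeg g K)) := by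
    intro q hq hmem
    have hc : (insert q G).card = K + 1 := by
      rw [Finset.card_insert_of_notMem (Finset.mem_sdiff.mp hq).2, hGcard]
    have h2 : (insert q G).card ≤ K := hK_le _ hmem
    omega
  have hexists : ∀ q ∈ Ω \ G, ∃ i, ¬ M (insert q (initSeg g i)) :=
    fun q hq => ⟨K, hdepK q hq⟩
  -- minimal dependence index
  set ι := {q // q ∈ Ω \ G} with hι
  let h : ι → ℕ := fun q => Nat.find (hexists q.1 q.2)
  have hdep : ∀ q : ι, ¬ M (insert q.1 (initSeg g (h q))) :=
    fun q => Nat.find_spec (hexists q.1 q.2)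
  have hmin : ∀ q : ι, ∀ j < h q, M (insert q.1 (initSeg g j)) :=
    fun q j hj => not_not.mp (Nat.find_min (hexists q.1 q.2) hj)
  have hhK : ∀ q : ι, h q ≤ K := fun q => Nat.find_min' _ (hdepK q.1 q.2)
  have hh1 : ∀ q : ι, 1 ≤ h q := by
    intro q
    by_contra hc
    have h0 : h q = 0 := by omega
    apply hdep q
    rw [h0, initSeg_zero]
    exact hM_down _ _ hΩ (by
      intro x hx
      rw [Finset.mem_insert] at hx
      rcases hx with rfl | hx
      · exact (Finset.mem_sdiff.mp q.2).1
      · simp at hx)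
  have hdepmono : ∀ (q : ι) (i : ℕ), h q ≤ i → ¬ M (insert q.1 (initSeg g i)) := by
    intro q i hi hMem
    exact hdep q (hM_down _ _ hMem
      (Finset.insert_subset_insert _ (initSeg_mono g hi)))
  -- Hall's theorem gives an injective choice of steps
  have hall : ∀ s : Finset ι, s.card ≤ (s.biUnion fun q => Finset.Icc 1 (h q)).card := by
    intro s
    rcases s.eq_empty_or_nonempty with rfl | hs
    · simp
    have hne : (s.image h).Nonempty := hs.image h
    set m := (s.image h).max' hne with hm
    obtain ⟨q0, hq0s, hq0⟩ := Finset.mem_image.mp ((s.image h).max'_mem hne)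
    have hmK : m ≤ K := by rw [hm, ← hq0]; exact hhK q0
    have hle : ∀ q ∈ s, h q ≤ m :=
      fun q hq => Finset.le_max' _ _ (Finset.mem_image_of_mem h hq)
    have h1 : s.card ≤ m := by
      have himg : s.image Subtype.val ⊆
          Ω.filter (fun q => ¬ M (insert q (initSeg g m))) := by
        intro x hx
        obtain ⟨q, hqs, rfl⟩ := Finset.mem_image.mp hx
        refine Finset.mem_filter.mpr ⟨(Finset.mem_sdiff.mp q.2).1, ?_⟩
        exact hdepmono q m (hle q hqs)
      calc s.card = (s.image Subtype.val).card :=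
            (Finset.card_image_of_injective s Subtype.val_injective).symm
        _ ≤ _ := Finset.card_le_card himg
        _ ≤ m := hcount m hmK
    have h2 : m ≤ (s.biUnion fun q => Finset.Icc 1 (h q)).card := by
      have : Finset.Icc 1 m ⊆ s.biUnion fun q => Finset.Icc 1 (h q) := by
        rw [hm, ← hq0]
        exact Finset.subset_biUnion_of_mem (fun q => Finset.Icc 1 (h q)) hq0s
      calc m = (Finset.Icc 1 m).card := by rw [Nat.card_Icc]; omega
        _ ≤ _ := Finset.card_le_card this
    omega
  obtain ⟨f, hf_inj, hf_mem⟩ :=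
    (Finset.all_card_le_biUnion_card_iff_exists_injective
      (fun q : ι => Finset.Icc 1 (h q))).mp hall
  have hf1 : ∀ q : ι, 1 ≤ f q := fun q => (Finset.mem_Icc.mp (hf_mem q)).1
  have hfh : ∀ q : ι, f q ≤ h q := fun q => (Finset.mem_Icc.mp (hf_mem q)).2
  have hfK : ∀ q : ι, f q ≤ K := fun q => le_trans (hfh q) (hhK q)
  -- per-element bound
  have hstep : ∀ q : ι, marg Z q.1 G ≤ marg Z (g (f q)) (initSeg g (f q - 1)) := by
    intro q
    have qnotG : q.1 ∉ G := (Finset.mem_sdiff.mp q.2).2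
    have qN : q.1 ∈ N := hΩN (Finset.mem_sdiff.mp q.2).1
    have sub1 : initSeg g (f q - 1) ⊆ G := hGdef ▸ initSeg_mono g (by have := hfK q; omega)
    have qnotI : q.1 ∉ initSeg g (f q - 1) := fun hx => qnotG (sub1 hx)
    have hMq : M (insert q.1 (initSeg g (f q - 1))) :=
      hmin q (f q - 1) (by have := hf1 q; have := hfh q; omega)
    have s1 : marg Z q.1 G ≤ marg Z q.1 (initSeg g (f q - 1)) :=
      hZ_submod _ G _ sub1 hGN qN qnotG
    have s2 := hg_max (f q) (Finset.mem_Icc.mpr ⟨hf1 q, hfK q⟩) q.1 qN qnotI hMq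
    linarith
  -- assemble
  have hsplit : Ω ⊆ G ∪ (Ω \ G) := by
    intro x hx
    rw [Finset.mem_union, Finset.mem_sdiff]
    by_cases hxG : x ∈ G
    · exact Or.inl hxG
    · exact Or.inr ⟨hx, hxG⟩
  have hUN : G ∪ (Ω \ G) ⊆ N :=
    Finset.union_subset hGN (fun x hx => hΩN (Finset.mem_sdiff.mp hx).1)
  have b1 : Z Ω ≤ Z (G ∪ (Ω \ G)) := hZ_mono _ _ hsplit hUN
  have b2 : Z (G ∪ (Ω \ G)) ≤ Z G + ∑ q ∈ Ω \ G, marg Z q G :=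
    union_marg_bound N Z hZ_mono hZ_submod (Ω \ G) G hGN
      (fun x hx => hΩN (Finset.mem_sdiff.mp hx).1)
      (fun a ha => (Finset.mem_sdiff.mp ha).2)
  have b3 : ∑ q ∈ Ω \ G, marg Z q G ≤
      ∑ q ∈ (Ω \ G).attach, marg Z (g (f q)) (initSeg g (f q - 1)) := by
    rw [← Finset.sum_attach (Ω \ G) (fun q => marg Z q G)]
    exact Finset.sum_le_sum (fun q _ => hstep q)
  have b4 : ∑ q ∈ (Ω \ G).attach, marg Z (g (f q)) (initSeg g (f q - 1)) =
      ∑ i ∈ (Ω \ G).attach.image f, marg Z (g i) (initSeg g (i - 1)) := by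
    rw [Finset.sum_image (fun x _ y _ hxy => hf_inj hxy)]
  have b5 : ∑ i ∈ (Ω \ G).attach.image f, marg Z (g i) (initSeg g (i - 1)) ≤
      ∑ i ∈ Finset.Icc 1 K, marg Z (g i) (initSeg g (i - 1)) := by
    apply Finset.sum_le_sum_of_subset_of_nonneg
    · intro i hi
      obtain ⟨q, _, rfl⟩ := Finset.mem_image.mp hi
      exact Finset.mem_Icc.mpr ⟨hf1 q, hfK q⟩
    · intro i hi _
      have hi1 : 1 ≤ i := (Finset.mem_Icc.mp hi).1
      have hiK : i ≤ K := (Finset.mem_Icc.mp hi).2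
      have heq : insert (g i) (initSeg g (i - 1)) = initSeg g i := by
        conv_rhs => rw [show i = (i - 1) + 1 by omega]
        rw [initSeg_succ, show (i - 1) + 1 = i by omega]
      rw [marg, heq, sub_nonneg]
      exact hZ_mono _ _ (initSeg_mono g (by omega))
        (fun x hx => hGN (initSeg_mono g hiK hx))
  have b6 : ∑ i ∈ Finset.Icc 1 K, marg Z (g i) (initSeg g (i - 1)) = Z G := by
    rw [sum_marg_eq, hZ_empty, hGdef]; ring
  linarith
end

section
/- Let U be a finite set of users and R a finite set of n resources with monotone, submodular, normalized valuations Z_u for each u ∈ U. Let (u_1,r_1), …, (u_n,r_n) be a greedy allocation sequence with partial allocations G^i, output G, and increments ρ_i = ρ^{u_i}_{r_i}(G^{i−1}). For each i ∈ {1,…,n} let c_i ∈ [0,1] be a curvature bound for Z_{u_i}, and let d_i ≥ 1 be a real number such that d_i·ρ^{u'}_{r_i}(G^{i−1}) ≤ ρ_i for every user u' ∈ U ∖ {u_i} (so d_i is a lower bound on the discriminant at iteration i). Set Λ = max_{1 ≤ i ≤ n} (c_i + 1/d_i). Then for every full allocation Ω, max(1, Λ)·Z(G) ≥ Z(Ω);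 equivalently, Z(G)/Z(Ω) ≥ min(1, 1/Λ) whenever Z(Ω) > 0. -/
open Finset

/-- The set of resources allocated to user `u` by the allocation `S`. -/
def allocOf {β γ : Type*} [DecidableEq β] [DecidableEq γ]
    (S : Finset (β × γ)) (u : β) : Finset γ :=
  (S.filter fun p => p.1 = u).image Prod.snd

/-- Total valuation `Z(S) = Σ_{u ∈ U} Z_u(S_u)`. -/
def totalVal {β γ : Type*} [DecidableEq β] [DecidableEq γ]
    (U : Finset β) (Zu : β → Finset γ → ℝ) (S : Finset (β × γ)) : ℝ :=
  ∑ u ∈ U, Zu u (allocOf S u)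

/-- Marginal gain `ρ^u_r(S) = Z_u(S_u ∪ {r}) − Z_u(S_u)`. -/
def margP {β γ : Type*} [DecidableEq β] [DecidableEq γ]
    (Zu : β → Finset γ → ℝ) (u : β) (r : γ) (S : Finset (β × γ)) : ℝ :=
  Zu u (insert r (allocOf S u)) - Zu u (allocOf S u)

/-- The partial allocation `{(u 1, r 1), …, (u i, r i)}`. -/
def gAlloc {β γ : Type*} [DecidableEq β] [DecidableEq γ]
    (u : ℕ → β) (r : ℕ → γ) (i : ℕ) : Finset (β × γ) :=
  (Finset.Icc 1 i).image fun j => (u j, r j)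

/-- A partial allocation: each resource occurs in at most one pair. -/
def IsPartialAlloc {β γ : Type*} (U : Finset β) (R : Finset γ) (S : Finset (β × γ)) : Prop :=
  (∀ p ∈ S, p.1 ∈ U ∧ p.2 ∈ R) ∧ ∀ p ∈ S, ∀ q ∈ S, p.2 = q.2 → p = q

/-- A full allocation: every resource occurs in exactly one pair. -/
def IsFullAlloc {β γ : Type*} (U : Finset β) (R : Finset γ) (S : Finset (β × γ)) : Prop :=
  IsPartialAlloc U R S ∧ ∀ r ∈ R, ∃ u, (u, r) ∈ S

section Aux
variable {β γ : Type*} [DecidableEq β] [DecidableEq γ]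

lemma mem_allocOf {S : Finset (β × γ)} {v : β} {x : γ} :
    x ∈ allocOf S v ↔ (v, x) ∈ S := by
  constructor
  · intro hx
    simp only [allocOf, mem_image, mem_filter] at hx
    obtain ⟨p, ⟨hp, hp1⟩, hp2⟩ := hx
    rwa [show (v, x) = p from Prod.ext hp1.symm hp2.symm]
  · intro h
    simp only [allocOf, mem_image, mem_filter]
    exact ⟨(v, x), ⟨h, rfl⟩, rfl⟩

lemma mem_gAlloc {u : ℕ → β} {r : ℕ → γ} {k : ℕ} {v : β} {x : γ} :
    (v, x) ∈ gAlloc u r k ↔ ∃ j, j ∈ Finset.Icc 1 k ∧ u j = v ∧ r j = x := by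
  simp [gAlloc, Prod.ext_iff]

lemma allocOf_gAlloc (u : ℕ → β) (r : ℕ → γ) (k : ℕ) (v : β) :
    allocOf (gAlloc u r k) v = ((Finset.Icc 1 k).filter fun j => u j = v).image r := by
  ext x
  simp only [mem_allocOf, mem_gAlloc, mem_image, mem_filter]
  tauto

lemma allocOf_insert (S : Finset (β × γ)) (w v : β) (y : γ) :
    allocOf (insert (w, y) S) v
      = if w = v then insert y (allocOf S v) else allocOf S v := by
  by_cases h : w = v <;> simp [allocOf, filter_insert, h, image_insert]

lemma gAlloc_succ (u : ℕ → β) (r : ℕ → γ) (k : ℕ) :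
    gAlloc u r (k + 1) = insert (u (k + 1), r (k + 1)) (gAlloc u r k) := by
  unfold gAlloc
  rw [← Finset.insert_Icc_right_eq_Icc_add_one (by omega : 1 ≤ k + 1), image_insert]

lemma totalVal_gAlloc (U : Finset β) (Zu : β → Finset γ → ℝ) (u : ℕ → β) (r : ℕ → γ) (n : ℕ)
    (hzero : ∀ v ∈ U, Zu v (∅ : Finset γ) = 0)
    (hu_mem : ∀ i ∈ Finset.Icc 1 n, u i ∈ U) :
    ∀ k, k ≤ n → totalVal U Zu (gAlloc u r k) =
      ∑ i ∈ Finset.Icc 1 k, margP Zu (u i) (r i) (gAlloc u r (i - 1)) := by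
  intro k
  induction k with
  | zero =>
    intro _
    have h0 : gAlloc u r 0 = ∅ := by simp [gAlloc]
    simp only [h0]
    rw [show Finset.Icc 1 0 = (∅ : Finset ℕ) by simp]
    rw [sum_empty]
    refine Finset.sum_eq_zero fun v hv => ?_
    have : allocOf (∅ : Finset (β × γ)) v = ∅ := by simp [allocOf]
    rw [this]; exact hzero v hv
  | succ k ih =>
    intro hk1
    have hk : k ≤ n := by omega
    have hu1 : u (k + 1) ∈ U := hu_mem (k + 1) (by simp [Finset.mem_Icc]; omega)
    have hptw : ∀ v ∈ U,
        Zu v (allocOf (gAlloc u r (k + 1)) v)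
          = Zu v (allocOf (gAlloc u r k) v)
            + (if u (k + 1) = v then margP Zu (u (k+1)) (r (k+1)) (gAlloc u r k) else 0) := by
      intro v hv
      rw [gAlloc_succ, allocOf_insert]
      by_cases h : u (k + 1) = v
      · subst h; simp [margP]
      · simp [h]
    have hsum : totalVal U Zu (gAlloc u r (k + 1))
        = totalVal U Zu (gAlloc u r k) + margP Zu (u (k+1)) (r (k+1)) (gAlloc u r k) := by
      unfold totalVal
      rw [Finset.sum_congr rfl hptw, Finset.sum_add_distrib]
      congr 1
      rw [Finset.sum_ite_eq, if_pos hu1]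
    rw [hsum, ih hk, ← Finset.insert_Icc_right_eq_Icc_add_one (by omega : 1 ≤ k + 1),
      sum_insert (by simp)]
    simp only [Nat.add_sub_cancel]
    ring

end Aux

section SubmodAux
variable {γ : Type*} [DecidableEq γ]

lemma submod_union_le (R : Finset γ) (f : Finset γ → ℝ)
    (hsub : ∀ S T : Finset γ, ∀ x, S ⊆ T → T ⊆ R → x ∈ R → x ∉ T →
      f (insert x T) - f T ≤ f (insert x S) - f S)
    (B : Finset γ) (hB : B ⊆ R) :
    ∀ C : Finset γ, C ⊆ R → Disjoint C B →
      f (B ∪ C) ≤ f B + ∑ x ∈ C, (f (insert x B) - f B) := by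
  intro C
  induction C using Finset.induction_on with
  | empty => simp
  | insert a s ha ih =>
    intro hCR hdisj
    have haR : a ∈ R := hCR (mem_insert_self a s)
    have hsR : s ⊆ R := fun y hy => hCR (mem_insert_of_mem hy)
    have hdisj' : Disjoint s B := (Finset.disjoint_insert_left.mp hdisj).2
    have haB : a ∉ B := (Finset.disjoint_insert_left.mp hdisj).1
    have haBs : a ∉ B ∪ s := by simp [haB, ha]
    have hstep := hsub B (B ∪ s) a subset_union_left (union_subset hB hsR) haR haBs
    have hih := ih hsR hdisj'
    have hBu : B ∪ insert a s = insert a (B ∪ s) := union_insert _ _ _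
    rw [hBu, sum_insert ha]
    linarith

lemma curv_union_ge (R : Finset γ) (f : Finset γ → ℝ) (g : γ → ℝ)
    (A : Finset γ) (hA : A ⊆ R) :
    ∀ C : Finset γ, C ⊆ R → Disjoint C A →
      (∀ x ∈ C, ∀ S : Finset γ, S ⊆ R → x ∉ S → g x ≤ f (insert x S) - f S) →
      f A + ∑ x ∈ C, g x ≤ f (A ∪ C) := by
  intro C
  induction C using Finset.induction_on with
  | empty => simp
  | insert a s ha ih =>
    intro hCR hdisj hg
    have haR : a ∈ R := hCR (mem_insert_self a s)
    have hsR : s ⊆ R := fun y hy => hCR (mem_insert_of_mem hy)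
    have hdisj' : Disjoint s A := (Finset.disjoint_insert_left.mp hdisj).2
    have haA : a ∉ A := (Finset.disjoint_insert_left.mp hdisj).1
    have haAs : a ∉ A ∪ s := by simp [haA, ha]
    have hih := ih hsR hdisj' (fun x hx => hg x (mem_insert_of_mem hx))
    have hga := hg a (mem_insert_self a s) (A ∪ s) (union_subset hA hsR) haAs
    have hAu : A ∪ insert a s = insert a (A ∪ s) := union_insert _ _ _
    rw [hAu, sum_insert ha]
    linarith

end SubmodAux

/-- Discriminant-and-curvature guarantee for the greedy algorithm on the
submodular partition problem: `Z(Ω) ≤ max(1, Λ)·Z(G)` where `Λ ≥ c_i + 1/d_i` for all `i`. -/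
theorem greedy_partition_discriminant_approx {β γ : Type*} [DecidableEq β] [DecidableEq γ]
    (U : Finset β) (R : Finset γ) (n : ℕ) (hn : R.card = n)
    (Zu : β → Finset γ → ℝ)
    (hmono : ∀ u ∈ U, ∀ S T : Finset γ, S ⊆ T → T ⊆ R → Zu u S ≤ Zu u T)
    (hsubmod : ∀ u ∈ U, ∀ S T : Finset γ, ∀ x, S ⊆ T → T ⊆ R → x ∈ R → x ∉ T →
      Zu u (insert x T) - Zu u T ≤ Zu u (insert x S) - Zu u S)
    (hzero : ∀ u ∈ U, Zu u (∅ : Finset γ) = 0)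
    (u : ℕ → β) (r : ℕ → γ)
    (hu_mem : ∀ i ∈ Finset.Icc 1 n, u i ∈ U)
    (hr_inj : Set.InjOn r (Set.Icc 1 n)) (hr_img : (Finset.Icc 1 n).image r = R)
    (hgreedy : ∀ i ∈ Finset.Icc 1 n, ∀ u' ∈ U, ∀ r' ∈ R,
      r' ∉ (Finset.Icc 1 (i - 1)).image r →
      margP Zu u' r' (gAlloc u r (i - 1)) ≤ margP Zu (u i) (r i) (gAlloc u r (i - 1)))
    (c : ℕ → ℝ) (hc : ∀ i ∈ Finset.Icc 1 n, 0 ≤ c i ∧ c i ≤ 1)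
    (hcurv : ∀ i ∈ Finset.Icc 1 n, ∀ S ⊆ R, ∀ x ∈ R, x ∉ S → 0 < Zu (u i) {x} →
      (1 - c i) * Zu (u i) {x} ≤ Zu (u i) (insert x S) - Zu (u i) S)
    (d : ℕ → ℝ) (hd : ∀ i ∈ Finset.Icc 1 n, 1 ≤ d i)
    (hdisc : ∀ i ∈ Finset.Icc 1 n, ∀ u' ∈ U, u' ≠ u i →
      d i * margP Zu u' (r i) (gAlloc u r (i - 1)) ≤
        margP Zu (u i) (r i) (gAlloc u r (i - 1)))
    (Λ : ℝ) (hΛ : ∀ i ∈ Finset.Icc 1 n, c i + 1 / d i ≤ Λ)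
 :
    ∀ Ω : Finset (β × γ), IsFullAlloc U R Ω →
      totalVal U Zu Ω ≤ max 1 Λ * totalVal U Zu (gAlloc u r n) := by
  intro Ω hΩ
  obtain ⟨⟨hΩmem, hΩuniq⟩, hΩfull⟩ := hΩ
  set G := gAlloc u r n with hGdef
  set ρ : ℕ → ℝ := fun i => margP Zu (u i) (r i) (gAlloc u r (i - 1)) with hρdef
  -- basic facts
  have hrR : ∀ i ∈ Finset.Icc 1 n, r i ∈ R := fun i hi => by
    rw [← hr_img]; exact mem_image_of_mem r hi
  have hinjF : ∀ i ∈ Finset.Icc 1 n, ∀ j ∈ Finset.Icc 1 n, r i = r j → i = j := by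
    intro i hi j hj hij
    exact hr_inj (by simpa [Set.mem_Icc] using Finset.mem_Icc.mp hi)
      (by simpa [Set.mem_Icc] using Finset.mem_Icc.mp hj) hij
  have hGalloc_sub : ∀ k, k ≤ n → ∀ v, allocOf (gAlloc u r k) v ⊆ R := by
    intro k hk v
    rw [allocOf_gAlloc]
    intro x hx
    obtain ⟨j, hj, rfl⟩ := Finset.mem_image.mp hx
    have hj' := (Finset.mem_filter.mp hj).1
    exact hrR j (Finset.Icc_subset_Icc_right hk hj')
  have hΩalloc_sub : ∀ v, allocOf Ω v ⊆ R := fun v x hx =>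
    (hΩmem _ (mem_allocOf.mp hx)).2
  have halloc_mono : ∀ k k', k ≤ k' → ∀ v,
      allocOf (gAlloc u r k) v ⊆ allocOf (gAlloc u r k') v := by
    intro k k' hkk v
    rw [allocOf_gAlloc, allocOf_gAlloc]
    exact Finset.image_subset_image
      (Finset.filter_subset_filter _ (Finset.Icc_subset_Icc_right hkk))
  have hrnot : ∀ i ∈ Finset.Icc 1 n, ∀ v, r i ∉ allocOf (gAlloc u r (i - 1)) v := by
    intro i hi v h
    rw [allocOf_gAlloc] at h
    obtain ⟨j, hj, hrj⟩ := Finset.mem_image.mp h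
    have hj1 := Finset.mem_Icc.mp (Finset.mem_filter.mp hj).1
    have hii := Finset.mem_Icc.mp hi
    have : j = i := hinjF j (Finset.mem_Icc.mpr ⟨by omega, by omega⟩) i hi hrj
    omega
  have hρ0 : ∀ i ∈ Finset.Icc 1 n, 0 ≤ ρ i := by
    intro i hi
    have hii := Finset.mem_Icc.mp hi
    have hsub1 : allocOf (gAlloc u r (i-1)) (u i) ⊆ R := hGalloc_sub (i-1) (by omega) _
    have h1 := hmono (u i) (hu_mem i hi) _ _
      (Finset.subset_insert (r i) (allocOf (gAlloc u r (i-1)) (u i)))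
      (Finset.insert_subset (hrR i hi) hsub1)
    simp only [hρdef, margP]
    linarith
  have hρ_single : ∀ i ∈ Finset.Icc 1 n, ρ i ≤ Zu (u i) {r i} := by
    intro i hi
    have hii := Finset.mem_Icc.mp hi
    have h1 := hsubmod (u i) (hu_mem i hi) ∅ (allocOf (gAlloc u r (i-1)) (u i)) (r i)
      (Finset.empty_subset _) (hGalloc_sub (i-1) (by omega) _) (hrR i hi) (hrnot i hi _)
    have hz := hzero (u i) (hu_mem i hi)
    rw [show insert (r i) (∅ : Finset γ) = {r i} by simp] at h1
    simp only [hρdef, margP]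
    linarith
  have hfilt : ∀ i ∈ Finset.Icc 1 n,
      (Finset.Icc 1 n).filter (fun j => r j = r i) = {i} := by
    intro i hi
    ext j
    simp only [Finset.mem_filter, Finset.mem_singleton]
    constructor
    · rintro ⟨hj, hrj⟩; exact hinjF j hj i hi hrj
    · rintro rfl; exact ⟨hi, rfl⟩
  set gg : γ → ℝ := fun x => ∑ j ∈ (Finset.Icc 1 n).filter (fun j => r j = x),
    (1 - c j) * ρ j with hggdef
  set hh : γ → ℝ := fun x => ∑ j ∈ (Finset.Icc 1 n).filter (fun j => r j = x),
    (1 / d j) * ρ j with hhhdef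
  set KK : γ → ℝ := fun x => ∑ j ∈ (Finset.Icc 1 n).filter (fun j => r j = x),
    ρ j with hKKdef
  have hg_at : ∀ i ∈ Finset.Icc 1 n, gg (r i) = (1 - c i) * ρ i := by
    intro i hi; simp only [hggdef]; rw [hfilt i hi, Finset.sum_singleton]
  have hh_at : ∀ i ∈ Finset.Icc 1 n, hh (r i) = (1 / d i) * ρ i := by
    intro i hi; simp only [hhhdef]; rw [hfilt i hi, Finset.sum_singleton]
  have hK_at : ∀ i ∈ Finset.Icc 1 n, KK (r i) = ρ i := by
    intro i hi; simp only [hKKdef]; rw [hfilt i hi, Finset.sum_singleton]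
  have hK0 : ∀ x, 0 ≤ KK x := fun x =>
    Finset.sum_nonneg fun j hj => hρ0 j (Finset.mem_filter.mp hj).1
  have hGuniq : ∀ v w x, (v, x) ∈ G → (w, x) ∈ G → v = w := by
    intro v w x hvx hwx
    obtain ⟨i, hi, hui, hri⟩ := mem_gAlloc.mp hvx
    obtain ⟨j, hj, huj, hrj⟩ := mem_gAlloc.mp hwx
    have hij : i = j := hinjF i hi j hj (by rw [hri, hrj])
    subst hij
    rw [← hui, ← huj]
  have hGmem : ∀ i ∈ Finset.Icc 1 n, r i ∈ allocOf G (u i) := by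
    intro i hi; exact mem_allocOf.mpr (mem_gAlloc.mpr ⟨i, hi, rfl, rfl⟩)
  -- curvature bound on gg
  have hgg_bound : ∀ v ∈ U, ∀ x ∈ allocOf G v \ allocOf Ω v,
      ∀ S : Finset γ, S ⊆ R → x ∉ S → gg x ≤ Zu v (insert x S) - Zu v S := by
    intro v hv x hx S hS hxS
    have hxG := (Finset.mem_sdiff.mp hx).1
    obtain ⟨i, hi, hui, hri⟩ := mem_gAlloc.mp (mem_allocOf.mp hxG)
    subst hri
    subst hui
    rw [hg_at i hi]
    by_cases hw : 0 < Zu (u i) {r i}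
    · have hcur := hcurv i hi S hS (r i) (hrR i hi) hxS hw
      have h1 : (1 - c i) * ρ i ≤ (1 - c i) * Zu (u i) {r i} :=
        mul_le_mul_of_nonneg_left (hρ_single i hi) (by linarith [(hc i hi).2])
      linarith
    · have hρz : ρ i = 0 :=
        le_antisymm ((hρ_single i hi).trans (not_lt.mp hw)) (hρ0 i hi)
      rw [hρz, mul_zero]
      have := hmono (u i) (hu_mem i hi) S (insert (r i) S) (Finset.subset_insert _ _)
        (Finset.insert_subset (hrR i hi) hS)
      linarith
  -- discriminant bound on hh
  have hhh_bound : ∀ v ∈ U, ∀ x ∈ allocOf Ω v \ allocOf G v,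
      Zu v (insert x (allocOf G v)) - Zu v (allocOf G v) ≤ hh x := by
    intro v hv x hx
    obtain ⟨hxΩ, hxG⟩ := Finset.mem_sdiff.mp hx
    have hxR : x ∈ R := hΩalloc_sub v hxΩ
    rw [← hr_img] at hxR
    obtain ⟨i, hi, rfl⟩ := Finset.mem_image.mp hxR
    have hii := Finset.mem_Icc.mp hi
    have hvne : v ≠ u i := fun hvu => hxG (by rw [hvu]; exact hGmem i hi)
    have hstep1 : Zu v (insert (r i) (allocOf G v)) - Zu v (allocOf G v)
        ≤ margP Zu v (r i) (gAlloc u r (i-1)) := by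
      have h1 := hsubmod v hv (allocOf (gAlloc u r (i-1)) v) (allocOf G v) (r i)
        (halloc_mono (i-1) n (by omega) v)
        (hGalloc_sub n le_rfl v) (hrR i hi) (fun hmem => hxG hmem)
      simpa [margP] using h1
    have hdpos : (0:ℝ) < d i := lt_of_lt_of_le one_pos (hd i hi)
    have hdisc' := hdisc i hi v hv hvne
    have hstep2 : margP Zu v (r i) (gAlloc u r (i-1)) ≤ (1 / d i) * ρ i := by
      rw [one_div_mul_eq_div, le_div_iff₀ hdpos, mul_comm]
      exact hdisc'
    rw [hh_at i hi]
    linarith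
  -- per-user key inequality
  have key : ∀ v ∈ U,
      Zu v (allocOf Ω v) ≤ Zu v (allocOf G v)
        + (∑ x ∈ allocOf Ω v \ allocOf G v, hh x
            - ∑ x ∈ allocOf G v \ allocOf Ω v, gg x) := by
    intro v hv
    have hΩv := hΩalloc_sub v
    have hGv := hGalloc_sub n le_rfl v
    have lower := curv_union_ge R (Zu v) gg (allocOf Ω v) hΩv
      (allocOf G v \ allocOf Ω v) (Finset.sdiff_subset.trans hGv)
      Finset.sdiff_disjoint
      (fun x hx S hS hxS => hgg_bound v hv x hx S hS hxS)
    have upper := submod_union_le R (Zu v)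
      (fun S T x hS hT hx hxT => hsubmod v hv S T x hS hT hx hxT)
      (allocOf G v) hGv (allocOf Ω v \ allocOf G v) (Finset.sdiff_subset.trans hΩv)
      Finset.sdiff_disjoint
    have hsum2 : ∑ x ∈ allocOf Ω v \ allocOf G v,
          (Zu v (insert x (allocOf G v)) - Zu v (allocOf G v))
        ≤ ∑ x ∈ allocOf Ω v \ allocOf G v, hh x :=
      Finset.sum_le_sum (fun x hx => hhh_bound v hv x hx)
    have hseteq : allocOf Ω v ∪ (allocOf G v \ allocOf Ω v)
        = allocOf G v ∪ (allocOf Ω v \ allocOf G v) := by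
      rw [Finset.union_sdiff_self_eq_union, Finset.union_sdiff_self_eq_union,
        Finset.union_comm]
    rw [hseteq] at lower
    linarith
  -- the two difference regions coincide
  set D := U.biUnion (fun v => allocOf Ω v \ allocOf G v) with hD
  set D' := U.biUnion (fun v => allocOf G v \ allocOf Ω v) with hD'
  have hdisjΩ : (↑U : Set β).PairwiseDisjoint (fun v => allocOf Ω v \ allocOf G v) := by
    intro a _ b _ hab
    simp only [Function.onFun]
    rw [Finset.disjoint_left]
    intro x hxa hxb
    exact hab (congrArg Prod.fst (hΩuniq (a, x)
      (mem_allocOf.mp (Finset.mem_sdiff.mp hxa).1) (b, x)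
      (mem_allocOf.mp (Finset.mem_sdiff.mp hxb).1) rfl))
  have hdisjG : (↑U : Set β).PairwiseDisjoint (fun v => allocOf G v \ allocOf Ω v) := by
    intro a _ b _ hab
    simp only [Function.onFun]
    rw [Finset.disjoint_left]
    intro x hxa hxb
    exact hab (hGuniq a b x (mem_allocOf.mp (Finset.mem_sdiff.mp hxa).1)
      (mem_allocOf.mp (Finset.mem_sdiff.mp hxb).1))
  have hDD : D = D' := by
    ext x
    simp only [hD, hD', Finset.mem_biUnion]
    constructor
    · rintro ⟨v, hv, hx⟩
      obtain ⟨hxΩ, hxG⟩ := Finset.mem_sdiff.mp hx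
      have hxR : x ∈ R := hΩalloc_sub v hxΩ
      rw [← hr_img] at hxR
      obtain ⟨i, hi, rfl⟩ := Finset.mem_image.mp hxR
      refine ⟨u i, hu_mem i hi, Finset.mem_sdiff.mpr ⟨hGmem i hi, fun hmem => ?_⟩⟩
      have huv : u i = v := congrArg Prod.fst (hΩuniq (u i, r i)
        (mem_allocOf.mp hmem) (v, r i) (mem_allocOf.mp hxΩ) rfl)
      exact hxG (huv ▸ hGmem i hi)
    · rintro ⟨v, hv, hx⟩
      obtain ⟨hxG, hxΩ⟩ := Finset.mem_sdiff.mp hx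
      obtain ⟨i, hi, hui, hri⟩ := mem_gAlloc.mp (mem_allocOf.mp hxG)
      have hxR : x ∈ R := hri ▸ hrR i hi
      obtain ⟨w, hw⟩ := hΩfull x hxR
      have hwU : w ∈ U := (hΩmem (w, x) hw).1
      refine ⟨w, hwU, Finset.mem_sdiff.mpr ⟨mem_allocOf.mpr hw, fun hmem => ?_⟩⟩
      have hwv : w = v := hGuniq w v x (mem_allocOf.mp hmem) (mem_allocOf.mp hxG)
      exact hxΩ (hwv ▸ mem_allocOf.mpr hw)
  -- assemble
  have hΛ1 : (1:ℝ) ≤ max 1 Λ := le_max_left 1 Λ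
  have hterm : ∀ x ∈ D, hh x - gg x ≤ (max 1 Λ - 1) * KK x := by
    intro x hx
    obtain ⟨v, hv, hx'⟩ := Finset.mem_biUnion.mp hx
    have hxR : x ∈ R := hΩalloc_sub v (Finset.mem_sdiff.mp hx').1
    rw [← hr_img] at hxR
    obtain ⟨i, hi, rfl⟩ := Finset.mem_image.mp hxR
    rw [hh_at i hi, hg_at i hi, hK_at i hi]
    have h1 : c i + 1 / d i ≤ max 1 Λ := (hΛ i hi).trans (le_max_right 1 Λ)
    have h2 := hρ0 i hi
    nlinarith
  have hDsubR : D ⊆ R := by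
    intro x hx
    obtain ⟨v, hv, hx'⟩ := Finset.mem_biUnion.mp hx
    exact hΩalloc_sub v (Finset.mem_sdiff.mp hx').1
  have hKR : ∑ x ∈ R, KK x = ∑ i ∈ Finset.Icc 1 n, ρ i := by
    rw [← hr_img, Finset.sum_image (fun x hx y hy => hinjF x hx y hy)]
    exact Finset.sum_congr rfl (fun i hi => hK_at i hi)
  have hTel : totalVal U Zu G = ∑ i ∈ Finset.Icc 1 n, ρ i :=
    totalVal_gAlloc U Zu u r n hzero hu_mem n le_rfl
  have main1 : totalVal U Zu Ω ≤ totalVal U Zu G + (∑ x ∈ D, hh x - ∑ x ∈ D', gg x) := by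
    unfold totalVal
    calc ∑ v ∈ U, Zu v (allocOf Ω v)
        ≤ ∑ v ∈ U, (Zu v (allocOf G v)
            + (∑ x ∈ allocOf Ω v \ allocOf G v, hh x
              - ∑ x ∈ allocOf G v \ allocOf Ω v, gg x)) := Finset.sum_le_sum key
      _ = ∑ v ∈ U, Zu v (allocOf G v)
            + (∑ v ∈ U, ∑ x ∈ allocOf Ω v \ allocOf G v, hh x
              - ∑ v ∈ U, ∑ x ∈ allocOf G v \ allocOf Ω v, gg x) := by
          rw [Finset.sum_add_distrib, Finset.sum_sub_distrib]
      _ = ∑ v ∈ U, Zu v (allocOf G v) + (∑ x ∈ D, hh x - ∑ x ∈ D', gg x) := by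
          rw [hD, hD', Finset.sum_biUnion hdisjΩ, Finset.sum_biUnion hdisjG]
  have main2 : ∑ x ∈ D, hh x - ∑ x ∈ D', gg x = ∑ x ∈ D, (hh x - gg x) := by
    rw [← hDD, Finset.sum_sub_distrib]
  have main3 : ∑ x ∈ D, (hh x - gg x) ≤ (max 1 Λ - 1) * totalVal U Zu G := by
    calc ∑ x ∈ D, (hh x - gg x) ≤ ∑ x ∈ D, (max 1 Λ - 1) * KK x := Finset.sum_le_sum hterm
      _ ≤ ∑ x ∈ R, (max 1 Λ - 1) * KK x :=
          Finset.sum_le_sum_of_subset_of_nonneg hDsubR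
            (fun x _ _ => mul_nonneg (by linarith) (hK0 x))
      _ = (max 1 Λ - 1) * ∑ x ∈ R, KK x := by rw [Finset.mul_sum]
      _ = (max 1 Λ - 1) * totalVal U Zu G := by rw [hKR, ← hTel]
  have hfin : max 1 Λ * totalVal U Zu G
      = totalVal U Zu G + (max 1 Λ - 1) * totalVal U Zu G := by ring
  rw [hfin]
  linarith
end

section
/- Let N be a finite ground set, (N, 𝓜) a matroid, Z a monotone, submodular, normalized set function on N, and c ∈ [0,1] a curvature bound for Z. Let A, B ∈ 𝓜 and let (a_1, …, a_{|A|}) be any enumeration of A. Then Z(B) ≤ Σ_{i : a_i ∈ A ∩ B} ρ_{a_i}(A^{i−1}) + c·Σ_{i : a_i ∈ A ∖ B} ρ_{a_i}(A^{i−1}) + Σ_{b ∈ B ∖ A} ρ_b(A). -/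
open Finset

/-- Curvature inequality (Conforti–Cornuéjols Lemma 2.1): for `A, B ∈ 𝓜`
and any enumeration of `A`,
`Z(B) ≤ Σ_{i : a_i ∈ A ∩ B} ρ_{a_i}(A^{i−1}) + c·Σ_{i : a_i ∈ A ∖ B} ρ_{a_i}(A^{i−1})
  + Σ_{b ∈ B ∖ A} ρ_b(A)`. -/
theorem curvature_fundamental_bound {α : Type*} [DecidableEq α]
    (N : Finset α) (M : Finset α → Prop)
    (hM_ground : ∀ S, M S → S ⊆ N) (hM_empty : M ∅)
    (hM_down : ∀ S T : Finset α, M T → S ⊆ T → M S)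
    (hM_aug : ∀ S T : Finset α, M S → M T → S.card < T.card → ∃ x ∈ T \ S, M (insert x S))
    (Z : Finset α → ℝ)
    (hZ_mono : ∀ S T : Finset α, S ⊆ T → T ⊆ N → Z S ≤ Z T)
    (hZ_submod : ∀ S T : Finset α, ∀ x, S ⊆ T → T ⊆ N → x ∈ N → x ∉ T →
      Z (insert x T) - Z T ≤ Z (insert x S) - Z S)
    (hZ_empty : Z ∅ = 0)
    (c : ℝ) (hc0 : 0 ≤ c) (hc1 : c ≤ 1)
    (hcurv : ∀ S ⊆ N, ∀ j ∈ N, j ∉ S → 0 < marg Z j (∅ : Finset α) →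
      (1 - c) * marg Z j (∅ : Finset α) ≤ marg Z j S)
    (A B : Finset α) (hA_M : M A) (hB_M : M B)
    (m : ℕ) (hm : A.card = m)
    (a : ℕ → α) (ha_inj : Set.InjOn a (Set.Icc 1 m))
    (ha_img : (Finset.Icc 1 m).image a = A) :
    Z B ≤ (∑ i ∈ (Finset.Icc 1 m).filter fun i => a i ∈ B,
        marg Z (a i) (initSeg a (i - 1)))
      + c * (∑ i ∈ (Finset.Icc 1 m).filter fun i => a i ∉ B,
        marg Z (a i) (initSeg a (i - 1)))
      + ∑ b ∈ B \ A, marg Z b A := by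
  classical
  have hA : A ⊆ N := hM_ground A hA_M
  have hB : B ⊆ N := hM_ground B hB_M
  -- initSeg basics
  have hinit_sub : ∀ k, k ≤ m → initSeg a k ⊆ A := by
    intro k hk x hx
    simp only [initSeg, mem_image, mem_Icc] at hx
    obtain ⟨i, ⟨hi1, hi2⟩, rfl⟩ := hx
    rw [← ha_img]
    exact mem_image.2 ⟨i, mem_Icc.2 ⟨hi1, hi2.trans hk⟩, rfl⟩
  have hinit_succ : ∀ k : ℕ, initSeg a (k + 1) = insert (a (k + 1)) (initSeg a k) := by
    intro k
    simp only [initSeg]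
    rw [show Finset.Icc 1 (k+1) = insert (k+1) (Finset.Icc 1 k) by
      ext j; simp [Nat.lt_succ_iff, Nat.le_succ_iff]; omega]
    rw [Finset.image_insert]
  have hnotmem : ∀ k : ℕ, k + 1 ≤ m → a (k + 1) ∉ initSeg a k := by
    intro k hk hmem
    simp only [initSeg, mem_image, mem_Icc] at hmem
    obtain ⟨j, ⟨hj1, hj2⟩, hje⟩ := hmem
    have : j = k + 1 := ha_inj (Set.mem_Icc.2 ⟨hj1, by omega⟩)
      (Set.mem_Icc.2 ⟨by omega, hk⟩) hje
    omega
  have hmarg_nonneg : ∀ q ∈ N, ∀ S, S ⊆ N → 0 ≤ marg Z q S := by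
    intro q hq S hS
    exact sub_nonneg.2 (hZ_mono S (insert q S) (subset_insert _ _) (insert_subset hq hS))
  -- curvature step
  have hstep : ∀ q ∈ N, ∀ S, S ⊆ N → q ∉ S → q ∉ B →
      (1 - c) * marg Z q S ≤ marg Z q (B ∪ S) := by
    intro q hq S hS hqS hqB
    have hBS : B ∪ S ⊆ N := union_subset hB hS
    have hqBS : q ∉ B ∪ S := by simp [hqB, hqS]
    have h1 : marg Z q S ≤ marg Z q ∅ := hZ_submod ∅ S q (empty_subset _) hS hq hqS
    have h0 : 0 ≤ marg Z q (B ∪ S) := hmarg_nonneg q hq _ hBS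
    by_cases hp : 0 < marg Z q (∅ : Finset α)
    · calc (1 - c) * marg Z q S ≤ (1 - c) * marg Z q ∅ := by nlinarith
        _ ≤ marg Z q (B ∪ S) := hcurv (B ∪ S) hBS q hq hqBS hp
    · have h2 : 0 ≤ marg Z q S := hmarg_nonneg q hq S hS
      nlinarith
  -- Fact A: telescoping Z A
  have factA : ∀ k, k ≤ m →
      Z (initSeg a k) = ∑ i ∈ Finset.Icc 1 k, marg Z (a i) (initSeg a (i - 1)) := by
    intro k
    induction k with
    | zero => intro _; simp [initSeg, hZ_empty]
    | succ n ih =>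
      intro h
      have hn := ih (by omega)
      rw [show Finset.Icc 1 (n+1) = insert (n+1) (Finset.Icc 1 n) by
        ext j; simp; omega]
      rw [Finset.sum_insert (by simp)]
      rw [hinit_succ n]
      have : marg Z (a (n+1)) (initSeg a n) = Z (insert (a (n+1)) (initSeg a n)) - Z (initSeg a n) := rfl
      simp only [Nat.add_sub_cancel]
      linarith [hn]
  -- Fact C
  have factC : ∀ k, k ≤ m →
      Z B + (1 - c) * ∑ i ∈ (Finset.Icc 1 k).filter (fun i => a i ∉ B),
        marg Z (a i) (initSeg a (i - 1)) ≤ Z (B ∪ initSeg a k) := by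
    intro k
    induction k with
    | zero => intro _; simp [initSeg]
    | succ n ih =>
      intro h
      have hn := ih (by omega)
      have hIcc : Finset.Icc 1 (n+1) = insert (n+1) (Finset.Icc 1 n) := by
        ext j; simp; omega
      rw [hinit_succ n]
      have hsub : initSeg a n ⊆ N := (hinit_sub n (by omega)).trans hA
      by_cases hmem : a (n+1) ∈ B
      · have hfilt : (Finset.Icc 1 (n+1)).filter (fun i => a i ∉ B)
            = (Finset.Icc 1 n).filter (fun i => a i ∉ B) := by
          rw [hIcc, Finset.filter_insert, if_neg (by simp [hmem])]
        rw [hfilt]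
        have : insert (a (n+1)) (B ∪ initSeg a n) = B ∪ initSeg a n := by
          rw [Finset.insert_eq_self]; exact Finset.mem_union_left _ hmem
        rw [Finset.union_insert, this]
        exact hn
      · have hfilt : (Finset.Icc 1 (n+1)).filter (fun i => a i ∉ B)
            = insert (n+1) ((Finset.Icc 1 n).filter (fun i => a i ∉ B)) := by
          rw [hIcc, Finset.filter_insert, if_pos hmem]
        rw [hfilt, Finset.sum_insert (by simp)]
        simp only [Nat.add_sub_cancel]
        have hq : a (n+1) ∈ N := hA (by rw [← ha_img]; exact mem_image.2 ⟨n+1, mem_Icc.2 ⟨by omega, h⟩, rfl⟩)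
        have hkey := hstep (a (n+1)) hq (initSeg a n) hsub (hnotmem n h) hmem
        have heq : marg Z (a (n+1)) (B ∪ initSeg a n)
            = Z (B ∪ insert (a (n+1)) (initSeg a n)) - Z (B ∪ initSeg a n) := by
          rw [Finset.union_insert]; rfl
        rw [heq] at hkey
        linarith
  -- Fact D
  have factD : ∀ S, S ⊆ N → Z (A ∪ S) ≤ Z A + ∑ b ∈ S \ A, marg Z b A := by
    intro S
    induction S using Finset.induction_on with
    | empty => intro _; simp
    | insert _ _ hx =>
      rename_i x S ih
      intro hS
      have hS' : S ⊆ N := (subset_insert _ _).trans hS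
      have hxN : x ∈ N := hS (mem_insert_self _ _)
      by_cases hxA : x ∈ A
      · have h1 : A ∪ insert x S = A ∪ S := by
          rw [Finset.union_insert, Finset.insert_eq_self]; exact Finset.mem_union_left _ hxA
        have h2 : insert x S \ A = S \ A := by
          rw [Finset.insert_sdiff_of_mem _ hxA]
        rw [h1, h2]; exact ih hS'
      · have hxAS : x ∉ A ∪ S := by simp [hxA, hx]
        have h2 : insert x S \ A = insert x (S \ A) := Finset.insert_sdiff_of_notMem _ hxA
        rw [Finset.union_insert, h2, Finset.sum_insert (by simp [hx])]
        have hsub := hZ_submod A (A ∪ S) x Finset.subset_union_left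
          (union_subset hA hS') hxN hxAS
        have := ih hS'
        simp only [marg] at *
        linarith
  -- Combine
  have hA_eq : initSeg a m = A := ha_img
  have hCm := factC m le_rfl
  rw [hA_eq] at hCm
  have hDm := factD B hB
  rw [Finset.union_comm] at hCm
  have hAm := factA m le_rfl
  rw [hA_eq] at hAm
  have hsplit : ∑ i ∈ Finset.Icc 1 m, marg Z (a i) (initSeg a (i - 1))
      = (∑ i ∈ (Finset.Icc 1 m).filter (fun i => a i ∈ B), marg Z (a i) (initSeg a (i - 1)))
      + ∑ i ∈ (Finset.Icc 1 m).filter (fun i => a i ∉ B), marg Z (a i) (initSeg a (i - 1)) := by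
    rw [Finset.sum_filter_add_sum_filter_not]
  linarith
end

section
/- Let N be a finite ground set, (N, 𝓜) a matroid of rank K, Z a monotone, submodular, normalized set function on N, and g a greedy sequence for (Z, 𝓜) with output G, partial outputs G^i, and increments ρ_i = ρ_{g_i}(G^{i−1}). Let Ω be a basis with an enumeration (ω_1, …, ω_K) satisfying, for every i: G^{i−1} ∪ {ω_i} ∈ 𝓜, and ω_i ∈ G ∩ Ω implies ω_i = g_i. For each i let d_i ≥ 1 be a real number such that d_i·ρ_x(G^{i−1}) ≤ ρ_i for every x ∈ N ∖ G^{i−1} with x ≠ g_i and G^{i−1} ∪ {x} ∈ 𝓜. Then for every t ∈ {1, …, K} and every i with ω_i ∈ Ω ∖ G: if i > t then ρ_{ω_i}(G^{t−1}) ≤ ρ_t, and if 1 ≤ i ≤ t then d_i·ρ_{ω_i}(G^{t−1}) ≤ ρ_i. -/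
open Finset

/-- Bounds on marginal values of optimal elements against greedy
increments: for `ω_i ∈ Ω ∖ G`, if `i > t` then `ρ_{ω_i}(G^{t−1}) ≤ ρ_t`, and if `i ≤ t`
then `d_i·ρ_{ω_i}(G^{t−1}) ≤ ρ_i`. -/
theorem greedy_vs_optimal_marginals {α : Type*} [DecidableEq α]
    (N : Finset α) (M : Finset α → Prop)
    (hM_ground : ∀ S, M S → S ⊆ N) (hM_empty : M ∅)
    (hM_down : ∀ S T : Finset α, M T → S ⊆ T → M S)
    (hM_aug : ∀ S T : Finset α, M S → M T → S.card < T.card → ∃ x ∈ T \ S, M (insert x S))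
    (K : ℕ) (hK_le : ∀ S, M S → S.card ≤ K) (hK_ex : ∃ B, M B ∧ B.card = K)
    (Z : Finset α → ℝ)
    (hZ_mono : ∀ S T : Finset α, S ⊆ T → T ⊆ N → Z S ≤ Z T)
    (hZ_submod : ∀ S T : Finset α, ∀ x, S ⊆ T → T ⊆ N → x ∈ N → x ∉ T →
      Z (insert x T) - Z T ≤ Z (insert x S) - Z S)
    (hZ_empty : Z ∅ = 0)
    (g : ℕ → α) (hg_inj : Set.InjOn g (Set.Icc 1 K)) (hG_M : M (initSeg g K))
    (hg_max : ∀ i ∈ Finset.Icc 1 K, ∀ x ∈ N, x ∉ initSeg g (i - 1) →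
      M (insert x (initSeg g (i - 1))) →
      marg Z x (initSeg g (i - 1)) ≤ marg Z (g i) (initSeg g (i - 1)))
    (Ω : Finset α) (hΩ_M : M Ω) (hΩ_card : Ω.card = K)
    (ω : ℕ → α) (hω_inj : Set.InjOn ω (Set.Icc 1 K))
    (hω_img : (Finset.Icc 1 K).image ω = Ω)
    (hω_feas : ∀ i ∈ Finset.Icc 1 K, M (insert (ω i) (initSeg g (i - 1))))
    (hω_int : ∀ i ∈ Finset.Icc 1 K, ω i ∈ initSeg g K → ω i = g i)
    (d : ℕ → ℝ) (hd : ∀ i ∈ Finset.Icc 1 K, 1 ≤ d i)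
    (hdisc : ∀ i ∈ Finset.Icc 1 K, ∀ x ∈ N, x ∉ initSeg g (i - 1) → x ≠ g i →
      M (insert x (initSeg g (i - 1))) →
      d i * marg Z x (initSeg g (i - 1)) ≤ marg Z (g i) (initSeg g (i - 1))) :
    ∀ t ∈ Finset.Icc 1 K, ∀ i ∈ Finset.Icc 1 K, ω i ∉ initSeg g K →
      (t < i → marg Z (ω i) (initSeg g (t - 1)) ≤ marg Z (g t) (initSeg g (t - 1))) ∧
      (i ≤ t → d i * marg Z (ω i) (initSeg g (t - 1)) ≤
        marg Z (g i) (initSeg g (i - 1))) := by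
  have hmono : ∀ a b : ℕ, a ≤ b → initSeg g a ⊆ initSeg g b := by
    intro a b hab
    exact Finset.image_subset_image (Finset.Icc_subset_Icc_right hab)
  have hGN : initSeg g K ⊆ N := hM_ground _ hG_M
  have hΩN : Ω ⊆ N := hM_ground _ hΩ_M
  intro t ht i hi hωG
  simp only [Finset.mem_Icc] at ht hi
  have hωN : ω i ∈ N := by
    apply hΩN; rw [← hω_img]; exact Finset.mem_image_of_mem ω (by simp [hi.1, hi.2])
  have hωnot : ∀ a, a ≤ K → ω i ∉ initSeg g a := fun a ha h => hωG (hmono a K ha h)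
  constructor
  · intro hti
    have hfeas : M (insert (ω i) (initSeg g (t - 1))) := by
      refine hM_down _ _ (hω_feas i (by simp [hi.1, hi.2])) ?_
      exact Finset.insert_subset_insert _ (hmono _ _ (by omega))
    exact hg_max t (by simp [ht.1, ht.2]) (ω i) hωN (hωnot _ (by omega)) hfeas
  · intro hit
    have hn1 : ω i ∉ initSeg g (i - 1) := hωnot _ (by omega)
    have hne : ω i ≠ g i := by
      intro h
      exact hωnot K le_rfl (h ▸ Finset.mem_image_of_mem g (by simp [hi.1, hi.2]))
    have h1 := hdisc i (by simp [hi.1, hi.2]) (ω i) hωN hn1 hne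
      (hω_feas i (by simp [hi.1, hi.2]))
    have h2 : marg Z (ω i) (initSeg g (t - 1)) ≤ marg Z (ω i) (initSeg g (i - 1)) := by
      unfold marg
      exact hZ_submod _ _ _ (hmono _ _ (by omega))
        ((hmono (t-1) K (by omega)).trans hGN) hωN (hωnot _ (by omega))
    have hd0 : (0:ℝ) ≤ d i := le_trans zero_le_one (hd i (by simp [hi.1, hi.2]))
    calc d i * marg Z (ω i) (initSeg g (t - 1))
        ≤ d i * marg Z (ω i) (initSeg g (i - 1)) := mul_le_mul_of_nonneg_left h2 hd0
      _ ≤ marg Z (g i) (initSeg g (i - 1)) := h1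
end

section
/- Let U be a finite set of users and R a finite set of n resources with monotone, submodular, normalized valuations Z_u for each u ∈ U. Let (u_1,r_1), …, (u_n,r_n) be a greedy allocation sequence with partial allocations G^t, output G, and increments ρ_i = ρ^{u_i}_{r_i}(G^{i−1}), and for each i let d_i ≥ 1 be a real number with d_i·ρ^{u'}_{r_i}(G^{i−1}) ≤ ρ_i for every user u' ∈ U ∖ {u_i}. Let Ω be a full allocation, ordered as (û_1, r_1), …, (û_n, r_n) using the same resource order as the greedy sequence. Then for every t ∈ {0, 1, …, n} and every i with (û_i, r_i) ∈ Ω ∖ G: if i > t then ρ^{û_i}_{r_i}(G^t) ≤ ρ_{t+1}, and if 1 ≤ i ≤ t then d_i·ρ^{û_i}_{r_i}(G^t) ≤ ρ_i. -/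
open Finset

/-- Partition analogue of the marginal bounds: for `(û_i, r_i) ∈ Ω ∖ G`,
if `i > t` then `ρ^{û_i}_{r_i}(G^t) ≤ ρ_{t+1}`, and if `i ≤ t` then
`d_i·ρ^{û_i}_{r_i}(G^t) ≤ ρ_i`. -/
theorem partition_greedy_vs_optimal_marginals {β γ : Type*} [DecidableEq β] [DecidableEq γ]
    (U : Finset β) (R : Finset γ) (n : ℕ) (hn : R.card = n)
    (Zu : β → Finset γ → ℝ)
    (hmono : ∀ u ∈ U, ∀ S T : Finset γ, S ⊆ T → T ⊆ R → Zu u S ≤ Zu u T)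
    (hsubmod : ∀ u ∈ U, ∀ S T : Finset γ, ∀ x, S ⊆ T → T ⊆ R → x ∈ R → x ∉ T →
      Zu u (insert x T) - Zu u T ≤ Zu u (insert x S) - Zu u S)
    (hzero : ∀ u ∈ U, Zu u (∅ : Finset γ) = 0)
    (u : ℕ → β) (r : ℕ → γ)
    (hu_mem : ∀ i ∈ Finset.Icc 1 n, u i ∈ U)
    (hr_inj : Set.InjOn r (Set.Icc 1 n)) (hr_img : (Finset.Icc 1 n).image r = R)
    (hgreedy : ∀ i ∈ Finset.Icc 1 n, ∀ u' ∈ U, ∀ r' ∈ R,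
      r' ∉ (Finset.Icc 1 (i - 1)).image r →
      margP Zu u' r' (gAlloc u r (i - 1)) ≤ margP Zu (u i) (r i) (gAlloc u r (i - 1)))
    (d : ℕ → ℝ) (hd : ∀ i ∈ Finset.Icc 1 n, 1 ≤ d i)
    (hdisc : ∀ i ∈ Finset.Icc 1 n, ∀ u' ∈ U, u' ≠ u i →
      d i * margP Zu u' (r i) (gAlloc u r (i - 1)) ≤
        margP Zu (u i) (r i) (gAlloc u r (i - 1)))
    (uhat : ℕ → β) (Ω : Finset (β × γ))
    (hΩ_img : Ω = (Finset.Icc 1 n).image fun i => (uhat i, r i))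
    (hΩ_full : IsFullAlloc U R Ω) :
    ∀ t ≤ n, ∀ i ∈ Finset.Icc 1 n, (uhat i, r i) ∉ gAlloc u r n →
      (t < i → margP Zu (uhat i) (r i) (gAlloc u r t) ≤
        margP Zu (u (t + 1)) (r (t + 1)) (gAlloc u r t)) ∧
      (i ≤ t → d i * margP Zu (uhat i) (r i) (gAlloc u r t) ≤
        margP Zu (u i) (r i) (gAlloc u r (i - 1))) := by
  intro t ht i hi hG
  simp only [Finset.mem_Icc] at hi
  obtain ⟨hi1, hin⟩ := hi
  -- basic membership facts
  have huhatU : uhat i ∈ U := by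
    have : (uhat i, r i) ∈ Ω := by
      rw [hΩ_img]; exact Finset.mem_image.mpr ⟨i, Finset.mem_Icc.mpr ⟨hi1, hin⟩, rfl⟩
    exact (hΩ_full.1.1 _ this).1
  have hriR : r i ∈ R := by
    rw [← hr_img]; exact Finset.mem_image.mpr ⟨i, Finset.mem_Icc.mpr ⟨hi1, hin⟩, rfl⟩
  have mem_alloc : ∀ (w : β) (s : ℕ) (x : γ), x ∈ allocOf (gAlloc u r s) w ↔
      ∃ j, (1 ≤ j ∧ j ≤ s) ∧ u j = w ∧ r j = x := by
    intro w s x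
    simp only [allocOf, gAlloc, Finset.mem_image, Finset.mem_filter, Finset.mem_Icc]
    constructor
    · rintro ⟨⟨a, b⟩, ⟨⟨j, hj, h⟩, hb⟩, hx⟩
      obtain ⟨h1, h2⟩ := Prod.mk.injEq .. ▸ h
      exact ⟨j, hj, by simp_all, by simp_all⟩
    · rintro ⟨j, hj, h1, h2⟩
      exact ⟨(w, x), ⟨⟨j, hj, by rw [h1, h2]⟩, rfl⟩, rfl⟩
  have alloc_sub_R : ∀ (w : β) (s : ℕ), s ≤ n → allocOf (gAlloc u r s) w ⊆ R := by
    intro w s hs x hx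
    obtain ⟨j, ⟨hj1, hj2⟩, _, hjx⟩ := (mem_alloc w s x).mp hx
    rw [← hr_img]
    exact Finset.mem_image.mpr ⟨j, Finset.mem_Icc.mpr ⟨hj1, hj2.trans hs⟩, hjx⟩
  have alloc_mono : ∀ (w : β) (s s' : ℕ), s ≤ s' →
      allocOf (gAlloc u r s) w ⊆ allocOf (gAlloc u r s') w := by
    intro w s s' hss x hx
    obtain ⟨j, ⟨hj1, hj2⟩, h1, h2⟩ := (mem_alloc w s x).mp hx
    exact (mem_alloc w s' x).mpr ⟨j, ⟨hj1, hj2.trans hss⟩, h1, h2⟩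
  have hne : uhat i ≠ u i := by
    intro h
    apply hG
    rw [h]
    exact Finset.mem_image.mpr ⟨i, Finset.mem_Icc.mpr ⟨hi1, hin⟩, rfl⟩
  have ri_not_alloc : ∀ s, s ≤ n → r i ∉ allocOf (gAlloc u r s) (uhat i) := by
    intro s hs hx
    obtain ⟨j, ⟨hj1, hj2⟩, h1, h2⟩ := (mem_alloc (uhat i) s (r i)).mp hx
    have : j = i := hr_inj ⟨hj1, hj2.trans hs⟩ ⟨hi1, hin⟩ h2
    subst this; exact hne h1.symm
  constructor
  · -- case t < i
    intro hti
    have htn : t + 1 ≤ n := Nat.lt_of_lt_of_le hti hin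
    have hri_not : r i ∉ (Finset.Icc 1 (t + 1 - 1)).image r := by
      simp only [Nat.add_sub_cancel, Finset.mem_image, Finset.mem_Icc]
      rintro ⟨j, ⟨hj1, hj2⟩, hj⟩
      have : j = i := hr_inj ⟨hj1, hj2.trans (Nat.le_of_succ_le htn)⟩ ⟨hi1, hin⟩ hj
      omega
    have := hgreedy (t + 1) (Finset.mem_Icc.mpr ⟨Nat.le_add_left 1 t, htn⟩)
      (uhat i) huhatU (r i) hriR hri_not
    simpa using this
  · -- case i ≤ t
    intro hit
    have hstep : margP Zu (uhat i) (r i) (gAlloc u r t) ≤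
        margP Zu (uhat i) (r i) (gAlloc u r (i - 1)) := by
      have := hsubmod (uhat i) huhatU (allocOf (gAlloc u r (i - 1)) (uhat i))
        (allocOf (gAlloc u r t) (uhat i)) (r i)
        (alloc_mono _ _ _ (by omega)) (alloc_sub_R _ _ ht) hriR (ri_not_alloc t ht)
      simpa [margP] using this
    calc d i * margP Zu (uhat i) (r i) (gAlloc u r t)
        ≤ d i * margP Zu (uhat i) (r i) (gAlloc u r (i - 1)) := by
          apply mul_le_mul_of_nonneg_left hstep
          linarith [hd i (Finset.mem_Icc.mpr ⟨hi1, hin⟩)]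
      _ ≤ margP Zu (u i) (r i) (gAlloc u r (i - 1)) :=
          hdisc i (Finset.mem_Icc.mpr ⟨hi1, hin⟩) (uhat i) huhatU hne
end

section
/- Let N be a finite ground set, (N, 𝓜) a matroid of rank K, Z a monotone, submodular, normalized set function on N, and g a greedy sequence for (Z, 𝓜) with output G and partial outputs G^{i−1}. Suppose for some i ∈ {1, …, K} that the set G^{i−1}_⊥ = {x ∈ N ∖ G^{i−1} : G^{i−1} ∪ {x} ∈ 𝓜} has cardinality exactly K − i + 1. Then G = G^{i−1} ∪ G^{i−1}_⊥, and G^{i−1}_⊥ is contained in every basis of the matroid; in particular, g_j belongs to every basis for every j ≥ i. -/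
open Finset

lemma aug_extend {α : Type*} [DecidableEq α] (M : Finset α → Prop)
    (hM_aug : ∀ S T : Finset α, M S → M T → S.card < T.card → ∃ x ∈ T \ S, M (insert x S)) :
    ∀ n (S B : Finset α), M S → M B → S.card + n = B.card →
      ∃ B', M B' ∧ B'.card = B.card ∧ S ⊆ B' ∧ B' \ S ⊆ B := by
  intro n
  induction n with
  | zero => intro S B hS _ h; exact ⟨S, hS, by omega, subset_rfl, by simp⟩
  | succ n ih =>
    intro S B hS hB h
    obtain ⟨x, hxmem, hxM⟩ := hM_aug S B hS hB (by omega)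
    rw [mem_sdiff] at hxmem
    obtain ⟨B', hB'M, hB'c, hsub, hdiff⟩ := ih (insert x S) B hxM hB
      (by rw [card_insert_of_notMem hxmem.2]; omega)
    refine ⟨B', hB'M, hB'c, (subset_insert x S).trans hsub, ?_⟩
    intro y hy
    rw [mem_sdiff] at hy
    by_cases hyx : y = x
    · exact hyx ▸ hxmem.1
    · exact hdiff (mem_sdiff.mpr ⟨hy.1, by simp [hyx, hy.2]⟩)

/-- If at iteration `i` the feasible extension set
`G^{i−1}_⊥ = {x ∈ N ∖ G^{i−1} : G^{i−1} ∪ {x} ∈ 𝓜}` has exactly `K − i + 1` elements, then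
`G = G^{i−1} ∪ G^{i−1}_⊥`, `G^{i−1}_⊥` is contained in every basis, and in particular
`g j` belongs to every basis for every `j ≥ i`. -/
theorem greedy_tail_in_every_basis {α : Type*} [DecidableEq α]
    (N : Finset α) (M : Finset α → Prop)
    (hM_ground : ∀ S, M S → S ⊆ N) (hM_empty : M ∅)
    (hM_down : ∀ S T : Finset α, M T → S ⊆ T → M S)
    (hM_aug : ∀ S T : Finset α, M S → M T → S.card < T.card → ∃ x ∈ T \ S, M (insert x S))
    [DecidablePred M]
    (K : ℕ) (hK_le : ∀ S, M S → S.card ≤ K) (hK_ex : ∃ B, M B ∧ B.card = K)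
    (Z : Finset α → ℝ)
    (hZ_mono : ∀ S T : Finset α, S ⊆ T → T ⊆ N → Z S ≤ Z T)
    (hZ_submod : ∀ S T : Finset α, ∀ x, S ⊆ T → T ⊆ N → x ∈ N → x ∉ T →
      Z (insert x T) - Z T ≤ Z (insert x S) - Z S)
    (hZ_empty : Z ∅ = 0)
    (g : ℕ → α) (hg_inj : Set.InjOn g (Set.Icc 1 K)) (hG_M : M (initSeg g K))
    (hg_max : ∀ i ∈ Finset.Icc 1 K, ∀ x ∈ N, x ∉ initSeg g (i - 1) →
      M (insert x (initSeg g (i - 1))) →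
      marg Z x (initSeg g (i - 1)) ≤ marg Z (g i) (initSeg g (i - 1)))
    (i : ℕ) (hi : i ∈ Finset.Icc 1 K)
    (hcard : ((N \ initSeg g (i - 1)).filter
      fun x => M (insert x (initSeg g (i - 1)))).card = K - i + 1) :
    initSeg g K = initSeg g (i - 1) ∪ ((N \ initSeg g (i - 1)).filter
        fun x => M (insert x (initSeg g (i - 1)))) ∧
    (∀ B : Finset α, M B → B.card = K →
      ((N \ initSeg g (i - 1)).filter
        fun x => M (insert x (initSeg g (i - 1)))) ⊆ B) ∧
    (∀ j, i ≤ j → j ≤ K → ∀ B : Finset α, M B → B.card = K → g j ∈ B) := by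
  rw [Finset.mem_Icc] at hi
  obtain ⟨hi1, hiK⟩ := hi
  set P := initSeg g (i - 1) with hP
  set F := (N \ P).filter fun x => M (insert x P) with hF
  set G := initSeg g K with hG
  have hPG : P ⊆ G := by
    apply Finset.image_subset_image
    exact Finset.Icc_subset_Icc_right (by omega)
  have hGcard : G.card = K := by
    rw [hG, initSeg, Finset.card_image_of_injOn (by rw [Finset.coe_Icc]; exact hg_inj),
      Nat.card_Icc]
    omega
  have hPcard : P.card = i - 1 := by
    have hinj : Set.InjOn g ↑(Finset.Icc 1 (i - 1)) := by
      rw [Finset.coe_Icc]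
      exact hg_inj.mono (Set.Icc_subset_Icc_right (by omega))
    rw [hP, initSeg, Finset.card_image_of_injOn hinj, Nat.card_Icc]
    omega
  have hMP : M P := hM_down P G hG_M hPG
  -- elements g j for j ∈ [i, K] are in F
  have hjF : ∀ j, i ≤ j → j ≤ K → g j ∈ F := by
    intro j hij hjK
    have hjG : g j ∈ G := by
      rw [hG, initSeg]
      exact Finset.mem_image_of_mem g (Finset.mem_Icc.mpr ⟨by omega, hjK⟩)
    have hjP : g j ∉ P := by
      intro hjP
      rw [hP, initSeg, Finset.mem_image] at hjP
      obtain ⟨m, hm, hmj⟩ := hjP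
      rw [Finset.mem_Icc] at hm
      have := hg_inj (Set.mem_Icc.mpr ⟨hm.1, by omega⟩) (Set.mem_Icc.mpr ⟨by omega, hjK⟩) hmj
      omega
    have hins : insert (g j) P ⊆ G := Finset.insert_subset hjG hPG
    exact Finset.mem_filter.mpr ⟨Finset.mem_sdiff.mpr ⟨hM_ground G hG_M hjG, hjP⟩,
      hM_down _ G hG_M hins⟩
  -- G \ P ⊆ F
  have hGPF : G \ P ⊆ F := by
    intro x hx
    rw [Finset.mem_sdiff] at hx
    rw [hG, initSeg, Finset.mem_image] at hx
    obtain ⟨⟨j, hj, hjx⟩, hxP⟩ := hx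
    rw [Finset.mem_Icc] at hj
    have hij : i ≤ j := by
      by_contra h
      exact hxP (hjx ▸ Finset.mem_image_of_mem g (Finset.mem_Icc.mpr ⟨hj.1, by omega⟩))
    exact hjx ▸ hjF j hij hj.2
  have hGPcard : (G \ P).card = K - i + 1 := by
    rw [Finset.card_sdiff_of_subset hPG, hGcard, hPcard]; omega
  have hGPeq : G \ P = F := Finset.eq_of_subset_of_card_le hGPF (by rw [hGPcard, hcard])
  have hmain : G = P ∪ F := by
    rw [← hGPeq, Finset.union_sdiff_of_subset hPG]
  -- every basis contains F
  have hbasis : ∀ B : Finset α, M B → B.card = K → F ⊆ B := by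
    intro B hB hBcard
    obtain ⟨B', hB'M, hB'c, hsub, hdiff⟩ :=
      aug_extend M hM_aug (K - (i - 1)) P B hMP hB (by omega)
    have hB'F : B' \ P ⊆ F := by
      intro x hx
      rw [Finset.mem_sdiff] at hx
      refine Finset.mem_filter.mpr ⟨Finset.mem_sdiff.mpr ⟨hM_ground B' hB'M hx.1, hx.2⟩, ?_⟩
      exact hM_down _ B' hB'M (Finset.insert_subset hx.1 hsub)
    have hB'Pcard : (B' \ P).card = K - i + 1 := by
      rw [Finset.card_sdiff_of_subset hsub, hB'c, hBcard, hPcard]; omega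
    have : B' \ P = F := Finset.eq_of_subset_of_card_le hB'F (by rw [hB'Pcard, hcard])
    exact this ▸ hdiff
  exact ⟨hmain, hbasis, fun j hij hjK B hB hBc => hbasis B hB hBc (hjF j hij hjK)⟩
end

section
/- For every c ∈ [0,1), every real d with 1 ≤ d ≤ 1/(1 − c), and every ε > 0, there exist a finite resource set R with |R| = n, a two-element user set U, monotone, submodular, normalized valuations Z_u (u ∈ U) each admitting curvature bound c, a greedy allocation sequence (u_1,r_1), …, (u_n,r_n) with partial allocations G^i, output G, and increments ρ_i whose discriminants are all at least d (i.e., d·ρ^{u'}_{r_i}(G^{i−1}) ≤ ρ_i for every i and every user u' ≠ u_i), and a full allocation Ω with Z(Ω) > 0, such that Z(G) ≤ (1/(c + 1/d) + ε)·Z(Ω). Hence the approximation guarantee min(1, 1/(c + 1/d)) for the greedy algorithm on the submodular partition problem is tight. -/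
open Finset

set_option linter.unusedSectionVars false

/-- greedy-side user of item `j`: `true` iff `j` even. -/
def gux (j : ℕ) : Bool := decide (j % 2 = 0)

lemma gux_succ (j : ℕ) : gux (j+1) = !gux j := by
  unfold gux
  rcases Nat.mod_two_eq_zero_or_one j with h | h <;> simp [Nat.add_mod, h]

noncomputable def baseV (c d : ℝ) (v : Bool) (j : ℕ) : ℝ :=
  if j = 0 ∧ v = false then 1/d
  else if v = gux j then (d*(1-c))^j else (d*(1-c))^(j-1)

noncomputable def penV (c d : ℝ) (v : Bool) (S : Finset ℕ) (j : ℕ) : ℝ :=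
  if (j+1) ∈ S ∧ v ≠ gux (j+1) then c * (d*(1-c))^j else 0

noncomputable def ZV (c d : ℝ) (v : Bool) (S : Finset ℕ) : ℝ :=
  (∑ j ∈ S, baseV c d v j) - ∑ j ∈ S, penV c d v S j

lemma ZV_empty (c d : ℝ) (v : Bool) : ZV c d v ∅ = 0 := by simp [ZV]

lemma ZV_insert (c d : ℝ) (v : Bool) {x : ℕ} {S : Finset ℕ} (hx : x ∉ S) :
    ZV c d v (insert x S) = ZV c d v S + baseV c d v x
      - (if x+1 ∈ S ∧ v ≠ gux (x+1) then c * (d*(1-c))^x else 0)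
      - (if 0 < x ∧ x-1 ∈ S ∧ v ≠ gux x then c * (d*(1-c))^(x-1) else 0) := by
  have hpenx : penV c d v (insert x S) x
      = (if x+1 ∈ S ∧ v ≠ gux (x+1) then c * (d*(1-c))^x else 0) := by
    have hne : ¬ (x + 1 = x) := by omega
    simp only [penV, Finset.mem_insert, hne, false_or]
  have hpenS : ∑ j ∈ S, penV c d v (insert x S) j
      = (∑ j ∈ S, penV c d v S j)
        + (if 0 < x ∧ x-1 ∈ S ∧ v ≠ gux x then c * (d*(1-c))^(x-1) else 0) := by
    by_cases h : 0 < x ∧ x - 1 ∈ S ∧ v ≠ gux x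
    · obtain ⟨hx0, hmem, hv⟩ := h
      rw [if_pos ⟨hx0, hmem, hv⟩]
      rw [← Finset.sum_erase_add _ _ hmem, ← Finset.sum_erase_add _ _ hmem]
      have hcongr : ∀ j ∈ S.erase (x-1),
          penV c d v (insert x S) j = penV c d v S j := by
        intro j hj
        have hjx : ¬ (j + 1 = x) := by
          have := Finset.ne_of_mem_erase hj; omega
        simp only [penV, Finset.mem_insert, hjx, false_or]
      rw [Finset.sum_congr rfl hcongr]
      have e1 : x - 1 + 1 = x := by omega
      have h1 : penV c d v (insert x S) (x-1) = c * (d*(1-c))^(x-1) := by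
        simp [penV, e1, hv]
      have h2 : penV c d v S (x-1) = 0 := by
        simp [penV, e1, hx]
      rw [h1, h2]; ring
    · rw [if_neg h, add_zero]
      apply Finset.sum_congr rfl
      intro j hj
      by_cases hjx : j + 1 = x
      · push_neg at h
        have hv : v = gux x := by
          apply h (by omega)
          rw [show x - 1 = j by omega]; exact hj
        subst hjx
        simp [penV, hv, hx]
      · simp only [penV, Finset.mem_insert, hjx, false_or]
  unfold ZV
  rw [Finset.sum_insert hx, Finset.sum_insert hx, hpenx, hpenS]
  ring

section Bounds

variable {c d : ℝ} (hc0 : 0 ≤ c) (hc1 : c < 1) (hd1 : 1 ≤ d)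

include hc0 hc1 hd1

omit hc0 in lemma g_pos : 0 < d*(1-c) := by nlinarith

lemma baseV_nonneg (v : Bool) (j : ℕ) : 0 ≤ baseV c d v j := by
  have hg := g_pos hc1 hd1
  unfold baseV
  split_ifs <;> positivity

omit hc0 hc1 hd1 in lemma ZV_single (v : Bool) (x : ℕ) : ZV c d v {x} = baseV c d v x := by
  have := ZV_insert c d v (x := x) (S := ∅) (by simp)
  simpa [ZV_empty] using this

lemma marg_ge (v : Bool) {x : ℕ} {S : Finset ℕ} (hx : x ∉ S) :
    (1-c) * baseV c d v x ≤ ZV c d v (insert x S) - ZV c d v S := by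
  have hg := g_pos hc1 hd1
  rw [ZV_insert c d v hx]
  have hb := baseV_nonneg hc0 hc1 hd1 v x
  rw [show ZV c d v S + baseV c d v x
      - (if x+1 ∈ S ∧ v ≠ gux (x+1) then c * (d*(1-c))^x else 0)
      - (if 0 < x ∧ x-1 ∈ S ∧ v ≠ gux x then c * (d*(1-c))^(x-1) else 0)
      - ZV c d v S
      = baseV c d v x
      - (if x+1 ∈ S ∧ v ≠ gux (x+1) then c * (d*(1-c))^x else 0)
      - (if 0 < x ∧ x-1 ∈ S ∧ v ≠ gux x then c * (d*(1-c))^(x-1) else 0) by ring]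
  by_cases h1 : x+1 ∈ S ∧ v ≠ gux (x+1)
  · -- v = gux x, base = g^x
    have hvv : v = gux x := by
      have := h1.2
      rw [gux_succ] at this
      cases v <;> cases hh : gux x <;> simp_all
    have h2 : ¬ (0 < x ∧ x-1 ∈ S ∧ v ≠ gux x) := by
      intro h2; exact h2.2.2 hvv
    have hx0 : ¬ (x = 0 ∧ v = false) := by
      rintro ⟨rfl, rfl⟩
      simp [gux] at hvv
    rw [if_pos h1, if_neg h2]
    have hbase : baseV c d v x = (d*(1-c))^x := by
      rw [baseV, if_neg hx0, if_pos hvv]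
    rw [hbase]
    nlinarith [pow_nonneg (le_of_lt hg) x]
  · rw [if_neg h1]
    by_cases h2 : 0 < x ∧ x-1 ∈ S ∧ v ≠ gux x
    · rw [if_pos h2]
      have hx0 : ¬ (x = 0 ∧ v = false) := by
        rintro ⟨rfl, -⟩; omega
      have hbase : baseV c d v x = (d*(1-c))^(x-1) := by
        rw [baseV, if_neg hx0, if_neg h2.2.2]
      rw [hbase]; ring_nf
      exact le_refl _
    · rw [if_neg h2]
      nlinarith

end Bounds

section Bounds2

variable {c d : ℝ} (hc0 : 0 ≤ c) (hc1 : c < 1) (hd1 : 1 ≤ d)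

include hc0 hc1 hd1

lemma ZV_mono {S T : Finset ℕ} (hST : S ⊆ T) : ZV c d v S ≤ ZV c d v T := by
  have key : ∀ n : ℕ, ∀ S T : Finset ℕ, S ⊆ T → (T \ S).card = n →
      ZV c d v S ≤ ZV c d v T := by
    intro n
    induction n with
    | zero =>
      intro S T hST hcard
      rw [Finset.card_eq_zero, Finset.sdiff_eq_empty_iff_subset] at hcard
      rw [Finset.Subset.antisymm hST hcard]
    | succ n ih =>
      intro S T hST hcard
      have hne : (T \ S).Nonempty := by
        rw [← Finset.card_pos, hcard]; omega
      obtain ⟨x, hx⟩ := hne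
      rw [Finset.mem_sdiff] at hx
      have h1 : ZV c d v S ≤ ZV c d v (insert x S) := by
        have := marg_ge hc0 hc1 hd1 v hx.2 (S := S)
        have hb := baseV_nonneg hc0 hc1 hd1 v x
        nlinarith
      have h2 : ZV c d v (insert x S) ≤ ZV c d v T := by
        apply ih
        · intro y hy
          rcases Finset.mem_insert.mp hy with rfl | hy
          · exact hx.1
          · exact hST hy
        · rw [Finset.sdiff_insert]
          rw [Finset.card_erase_of_mem (Finset.mem_sdiff.mpr hx), hcard]
          omega
      linarith
  exact key (T \ S).card S T hST rfl

omit hc1 hd1 in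
lemma ZV_submod {S T : Finset ℕ} {x : ℕ} (hST : S ⊆ T) (hxT : x ∉ T)
    (hg : 0 ≤ d * (1-c)) :
    ZV c d v (insert x T) - ZV c d v T ≤ ZV c d v (insert x S) - ZV c d v S := by
  have hxS : x ∉ S := fun h => hxT (hST h)
  rw [ZV_insert c d v hxT, ZV_insert c d v hxS]
  have key : ∀ (P Q : Prop) [Decidable P] [Decidable Q] (w : ℝ), 0 ≤ w → (P → Q) →
      (if P then w else 0) ≤ (if Q then w else 0) := by
    intro P Q _ _ w hw hPQ
    split_ifs with h1 h2
    · exact le_refl w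
    · exact absurd (hPQ h1) h2
    · exact hw
    · exact le_refl 0
  have hw1 : (0:ℝ) ≤ c * (d*(1-c))^x := by positivity
  have hw2 : (0:ℝ) ≤ c * (d*(1-c))^(x-1) := by positivity
  have k1 := key (x+1 ∈ S ∧ v ≠ gux (x+1)) (x+1 ∈ T ∧ v ≠ gux (x+1)) _ hw1
    (fun h => ⟨hST h.1, h.2⟩)
  have k2 := key (0 < x ∧ x-1 ∈ S ∧ v ≠ gux x) (0 < x ∧ x-1 ∈ T ∧ v ≠ gux x) _ hw2
    (fun h => ⟨h.1, hST h.2.1, h.2.2⟩)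
  linarith

end Bounds2

lemma image_sub_one (m : ℕ) :
    (Finset.Icc 1 m).image (fun i => i - 1) = Finset.range m := by
  ext a
  simp only [Finset.mem_image, Finset.mem_Icc, Finset.mem_range]
  constructor
  · rintro ⟨j, ⟨h1, h2⟩, rfl⟩; omega
  · intro ha; exact ⟨a+1, ⟨by omega, by omega⟩, by omega⟩

lemma allocOf_pair_image (f : ℕ → Bool) (S : Finset ℕ) (v : Bool) :
    allocOf (S.image fun j => (f j, j)) v = S.filter (fun j => f j = v) := by
  ext t
  simp only [allocOf, Finset.mem_image, Finset.mem_filter]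
  constructor
  · rintro ⟨p, ⟨⟨j, hj, rfl⟩, h2⟩, rfl⟩
    exact ⟨hj, h2⟩
  · rintro ⟨ht, hf⟩
    exact ⟨(f t, t), ⟨⟨t, ht, rfl⟩, hf⟩, rfl⟩

lemma gAlloc_eq (m : ℕ) :
    gAlloc (fun i => gux (i-1)) (fun i => i-1) m
      = (Finset.range m).image (fun t => (gux t, t)) := by
  unfold gAlloc
  rw [← image_sub_one m, Finset.image_image]
  rfl

lemma allocOf_gAlloc_s17 (m : ℕ) (v : Bool) :
    allocOf (gAlloc (fun i => gux (i-1)) (fun i => i-1) m) v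
      = (Finset.range m).filter (fun t => gux t = v) := by
  rw [gAlloc_eq, allocOf_pair_image]

lemma marg_closed (c d : ℝ) (v : Bool) (m x : ℕ) (hmx : m ≤ x) :
    ZV c d v (insert x ((Finset.range m).filter fun t => gux t = v))
      - ZV c d v ((Finset.range m).filter fun t => gux t = v)
    = baseV c d v x
      - (if 0 < x ∧ x = m ∧ v ≠ gux x then c * (d*(1-c))^(x-1) else 0) := by
  set S := (Finset.range m).filter (fun t => gux t = v) with hS
  have hxS : x ∉ S := by
    intro h
    rw [hS, Finset.mem_filter, Finset.mem_range] at h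
    omega
  rw [ZV_insert c d v hxS]
  have h1 : ¬ (x+1 ∈ S ∧ v ≠ gux (x+1)) := by
    rintro ⟨h, -⟩
    rw [hS, Finset.mem_filter, Finset.mem_range] at h
    omega
  rw [if_neg h1]
  have h2 : (0 < x ∧ x-1 ∈ S ∧ v ≠ gux x) ↔ (0 < x ∧ x = m ∧ v ≠ gux x) := by
    constructor
    · rintro ⟨hx0, hmem, hv⟩
      rw [hS, Finset.mem_filter, Finset.mem_range] at hmem
      exact ⟨hx0, by omega, hv⟩
    · rintro ⟨hx0, rfl, hv⟩
      refine ⟨hx0, ?_, hv⟩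
      rw [hS, Finset.mem_filter, Finset.mem_range]
      refine ⟨by omega, ?_⟩
      have := gux_succ (x-1)
      rw [show x - 1 + 1 = x by omega] at this
      cases hgx : gux x <;> cases hgx1 : gux (x-1) <;>
        simp [hgx, hgx1] at this hv ⊢ <;> simp_all
  rw [if_congr h2 rfl rfl]
  ring



section Greedy

variable {c d : ℝ} (hc0 : 0 ≤ c) (hc1 : c < 1) (hd1 : 1 ≤ d) (hdc : d ≤ 1/(1-c))

omit hc0 hd1 in
include hc1 hdc in
lemma g_le_one : d*(1-c) ≤ 1 := by
  have h1c : (0:ℝ) < 1 - c := by linarith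
  have := mul_le_mul_of_nonneg_right hdc (le_of_lt h1c)
  rwa [one_div, inv_mul_cancel₀ (ne_of_gt h1c)] at this

lemma greedy_rho (k : ℕ) :
    ZV c d (gux k) (insert k ((Finset.range k).filter fun t => gux t = gux k))
      - ZV c d (gux k) ((Finset.range k).filter fun t => gux t = gux k)
    = (d*(1-c))^k := by
  rw [marg_closed c d (gux k) k k le_rfl]
  rw [if_neg (by rintro ⟨-, -, h⟩; exact h rfl), sub_zero]
  unfold baseV
  rw [if_neg, if_pos rfl]
  rintro ⟨rfl, h⟩
  simp [gux] at h

include hc0 hc1 hd1 hdc in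
lemma greedy_max (v : Bool) (k x : ℕ) (hkx : k ≤ x) :
    ZV c d v (insert x ((Finset.range k).filter fun t => gux t = v))
      - ZV c d v ((Finset.range k).filter fun t => gux t = v) ≤ (d*(1-c))^k := by
  have hg := g_pos hc1 hd1
  have hg1 := g_le_one hc1 hdc
  have hd0 : (0:ℝ) < d := lt_of_lt_of_le one_pos hd1
  rw [marg_closed c d v k x hkx]
  by_cases hv : v = gux x
  · rw [if_neg (by rintro ⟨-, -, h⟩; exact h hv), sub_zero]
    have hbase : baseV c d v x = (d*(1-c))^x := by
      unfold baseV
      rw [if_neg, if_pos hv]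
      rintro ⟨rfl, rfl⟩
      simp [gux] at hv
    rw [hbase]
    exact pow_le_pow_of_le_one (le_of_lt hg) hg1 hkx
  · by_cases hx0 : x = 0
    · subst hx0
      have hk0 : k = 0 := by omega
      subst hk0
      have hvf : v = false := by
        cases v
        · rfl
        · exact absurd (by simp [gux] : gux 0 = true).symm hv
      subst hvf
      rw [if_neg (by rintro ⟨h, -, -⟩; omega), sub_zero]
      unfold baseV
      rw [if_pos ⟨rfl, rfl⟩, pow_zero]
      rw [div_le_one hd0]
      exact hd1
    · have hbase : baseV c d v x = (d*(1-c))^(x-1) := by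
        unfold baseV
        rw [if_neg (by rintro ⟨rfl, -⟩; exact hx0 rfl), if_neg hv]
      rw [hbase]
      by_cases hxk : x = k
      · subst hxk
        rw [if_pos ⟨by omega, rfl, hv⟩]
        have h1 : (d*(1-c))^x = (d*(1-c))^(x-1) * (d*(1-c)) := by
          rw [← pow_succ]
          congr 1
          omega
        have h2 : 1 - c ≤ d*(1-c) := by nlinarith
        have h3 : (0:ℝ) ≤ (d*(1-c))^(x-1) := by positivity
        rw [h1]
        nlinarith
      · rw [if_neg (by rintro ⟨-, h, -⟩; exact hxk h), sub_zero]
        exact pow_le_pow_of_le_one (le_of_lt hg) hg1 (by omega)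

include hc0 hc1 hd1 in
lemma greedy_disc (v : Bool) (k : ℕ) (hv : v ≠ gux k) :
    d * (ZV c d v (insert k ((Finset.range k).filter fun t => gux t = v))
      - ZV c d v ((Finset.range k).filter fun t => gux t = v)) ≤ (d*(1-c))^k := by
  have hd0 : (0:ℝ) < d := lt_of_lt_of_le one_pos hd1
  rw [marg_closed c d v k k le_rfl]
  by_cases hk0 : k = 0
  · subst hk0
    have hvf : v = false := by
      cases v
      · rfl
      · exact absurd (by simp [gux] : gux 0 = true).symm (fun h => hv h.symm)
    subst hvf
    rw [if_neg (by rintro ⟨h, -, -⟩; omega), sub_zero]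
    unfold baseV
    rw [if_pos ⟨rfl, rfl⟩, pow_zero]
    field_simp
    exact le_rfl
  · have hbase : baseV c d v k = (d*(1-c))^(k-1) := by
      unfold baseV
      rw [if_neg (by rintro ⟨rfl, -⟩; exact hk0 rfl), if_neg hv]
    rw [hbase, if_pos ⟨by omega, rfl, hv⟩]
    apply le_of_eq
    have h1 : (d*(1-c))^k = (d*(1-c))^(k-1) * (d*(1-c)) := by
      rw [← pow_succ]
      congr 1
      omega
    rw [h1]
    ring

lemma ZV_pure (v b : Bool) (S : Finset ℕ) (hb : ∀ j ∈ S, gux j = b) :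
    ZV c d v S = ∑ j ∈ S, baseV c d v j := by
  have hpen : ∑ j ∈ S, penV c d v S j = 0 := by
    apply Finset.sum_eq_zero
    intro j hj
    unfold penV
    rw [if_neg]
    rintro ⟨h1, -⟩
    have e1 := hb _ hj
    have e2 := hb _ h1
    rw [gux_succ, e1] at e2
    cases b <;> simp_all
  unfold ZV
  rw [hpen, sub_zero]

lemma val_G (n : ℕ) :
    ∑ v : Bool, ZV c d v ((Finset.range n).filter fun t => gux t = v)
      = ∑ j ∈ Finset.range n, (d*(1-c))^j := by
  have h1 : ∀ v : Bool, ZV c d v ((Finset.range n).filter fun t => gux t = v)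
      = ∑ j ∈ (Finset.range n).filter (fun t => gux t = v), (d*(1-c))^j := by
    intro v
    rw [ZV_pure v v _ (fun j hj => (Finset.mem_filter.mp hj).2)]
    apply Finset.sum_congr rfl
    intro j hj
    have hjv := (Finset.mem_filter.mp hj).2
    unfold baseV
    rw [if_neg, if_pos hjv.symm]
    rintro ⟨rfl, rfl⟩
    simp [gux] at hjv
  simp only [h1]
  exact Finset.sum_fiberwise _ _ _

lemma val_Om (L : ℕ) :
    ∑ v : Bool, ZV c d v ((Finset.range (L+1)).filter fun j => (!gux j) = v)
      = 1/d + ∑ j ∈ Finset.range L, (d*(1-c))^j := by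
  have h1 : ∀ v : Bool, ZV c d v ((Finset.range (L+1)).filter fun j => (!gux j) = v)
      = ∑ j ∈ (Finset.range (L+1)).filter (fun j => (!gux j) = v),
          (if j = 0 then 1/d else (d*(1-c))^(j-1)) := by
    intro v
    rw [ZV_pure v (!v) _ (fun j hj => by
      have := (Finset.mem_filter.mp hj).2
      cases hgj : gux j <;> simp_all)]
    apply Finset.sum_congr rfl
    intro j hj
    have hjv := (Finset.mem_filter.mp hj).2
    by_cases hj0 : j = 0
    · subst hj0
      have hvf : v = false := by simpa [gux] using hjv.symm
      subst hvf
      unfold baseV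
      rw [if_pos ⟨rfl, rfl⟩, if_pos rfl]
    · have hne : v ≠ gux j := by
        cases hgj : gux j <;> simp_all
      unfold baseV
      rw [if_neg (by rintro ⟨rfl, -⟩; exact hj0 rfl), if_neg hne, if_neg hj0]
  simp only [h1]
  rw [Finset.sum_fiberwise _ _ _, Finset.sum_range_succ']
  simp [Nat.succ_ne_zero, add_comm]

end Greedy

set_option maxHeartbeats 1000000 in
/-- Tightness of the guarantee `min(1, 1/(c + 1/d))` for the greedy
algorithm on the submodular partition problem: for every `c ∈ [0,1)`, `1 ≤ d ≤ 1/(1−c)`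
and `ε > 0` there is an instance (two users, resources in `ℕ`) with curvature bound `c`,
all discriminants at least `d`, and a full allocation `Ω` with `Z(Ω) > 0` such that
`Z(G) ≤ (1/(c + 1/d) + ε)·Z(Ω)`. -/
theorem partition_discriminant_guarantee_tight
    (c : ℝ) (hc0 : 0 ≤ c) (hc1 : c < 1)
    (d : ℝ) (hd1 : 1 ≤ d) (hdc : d ≤ 1 / (1 - c))
    (ε : ℝ) (hε : 0 < ε) :
    ∃ (n : ℕ) (R : Finset ℕ) (Zu : Bool → Finset ℕ → ℝ) (u : ℕ → Bool) (r : ℕ → ℕ)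
      (Ω : Finset (Bool × ℕ)),
      R.card = n ∧
      (∀ v : Bool, ∀ S T : Finset ℕ, S ⊆ T → T ⊆ R → Zu v S ≤ Zu v T) ∧
      (∀ v : Bool, ∀ S T : Finset ℕ, ∀ x, S ⊆ T → T ⊆ R → x ∈ R → x ∉ T →
        Zu v (insert x T) - Zu v T ≤ Zu v (insert x S) - Zu v S) ∧
      (∀ v : Bool, Zu v (∅ : Finset ℕ) = 0) ∧
      (∀ v : Bool, ∀ S ⊆ R, ∀ x ∈ R, x ∉ S → 0 < Zu v {x} →
        (1 - c) * Zu v {x} ≤ Zu v (insert x S) - Zu v S) ∧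
      Set.InjOn r (Set.Icc 1 n) ∧ (Finset.Icc 1 n).image r = R ∧
      (∀ i ∈ Finset.Icc 1 n, ∀ v : Bool, ∀ r' ∈ R,
        r' ∉ (Finset.Icc 1 (i - 1)).image r →
        margP Zu v r' (gAlloc u r (i - 1)) ≤ margP Zu (u i) (r i) (gAlloc u r (i - 1))) ∧
      (∀ i ∈ Finset.Icc 1 n, ∀ v : Bool, v ≠ u i →
        d * margP Zu v (r i) (gAlloc u r (i - 1)) ≤
          margP Zu (u i) (r i) (gAlloc u r (i - 1))) ∧
      IsFullAlloc (Finset.univ : Finset Bool) R Ω ∧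
      0 < totalVal (Finset.univ : Finset Bool) Zu Ω ∧
      totalVal (Finset.univ : Finset Bool) Zu (gAlloc u r n) ≤
        (1 / (c + 1 / d) + ε) * totalVal (Finset.univ : Finset Bool) Zu Ω := by
  classical
  set L : ℕ := max 1 ⌈1/ε⌉₊ with hL
  have hd0 : (0:ℝ) < d := lt_of_lt_of_le one_pos hd1
  have hg : (0:ℝ) < d*(1-c) := g_pos hc1 hd1
  have hg1 : d*(1-c) ≤ 1 := g_le_one hc1 (by rwa [one_div] at hdc ⊢)
  refine ⟨L+1, Finset.range (L+1), ZV c d, (fun i => gux (i-1)), (fun i => i-1),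
    (Finset.range (L+1)).image (fun j => (!gux j, j)), ?_, ?_, ?_, ?_, ?_, ?_, ?_, ?_, ?_, ?_, ?_, ?_⟩
  · exact Finset.card_range _
  · intro v S T hST _
    exact ZV_mono hc0 hc1 hd1 hST
  · intro v S T x hST _ _ hxT
    exact ZV_submod hc0 hST hxT (le_of_lt hg)
  · intro v
    exact ZV_empty c d v
  · intro v S _ x _ hxS _
    rw [ZV_single]
    exact marg_ge hc0 hc1 hd1 v hxS
  · intro a ha b hb hab
    simp only [Set.mem_Icc] at ha hb
    simp only at hab
    omega
  · exact image_sub_one (L+1)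
  · intro i hi v r' hr' hnot
    rw [Finset.mem_Icc] at hi
    rw [image_sub_one (i-1), Finset.mem_range] at hnot
    have hir : i - 1 ≤ r' := by omega
    simp only [margP, allocOf_gAlloc_s17]
    rw [greedy_rho (i-1)]
    exact greedy_max hc0 hc1 hd1 (by rwa [one_div] at hdc ⊢) v (i-1) r' hir
  · intro i hi v hv
    simp only [margP, allocOf_gAlloc_s17]
    rw [greedy_rho (i-1)]
    exact greedy_disc hc0 hc1 hd1 v (i-1) hv
  · refine ⟨⟨?_, ?_⟩, ?_⟩
    · rintro p hp
      obtain ⟨j, hj, rfl⟩ := Finset.mem_image.mp hp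
      exact ⟨Finset.mem_univ _, hj⟩
    · rintro p hp q hq hpq
      obtain ⟨j, hj, rfl⟩ := Finset.mem_image.mp hp
      obtain ⟨j', hj', rfl⟩ := Finset.mem_image.mp hq
      simp only at hpq
      subst hpq
      rfl
    · intro x hx
      exact ⟨!gux x, Finset.mem_image.mpr ⟨x, hx, rfl⟩⟩
  · unfold totalVal
    simp only [allocOf_pair_image]
    rw [show (∑ u ∈ Finset.univ, ZV c d u ((Finset.range (L+1)).filter fun j => (!gux j) = u))
        = 1/d + ∑ j ∈ Finset.range L, (d*(1-c))^j from val_Om L]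
    have h1 : (0:ℝ) < 1/d := by positivity
    have h2 : (0:ℝ) ≤ ∑ j ∈ Finset.range L, (d*(1-c))^j :=
      Finset.sum_nonneg fun j _ => by positivity
    linarith
  · unfold totalVal
    simp only [allocOf_gAlloc_s17, allocOf_pair_image]
    rw [show (∑ u ∈ Finset.univ, ZV c d u ((Finset.range (L+1)).filter fun t => gux t = u))
        = ∑ j ∈ Finset.range (L+1), (d*(1-c))^j from val_G (L+1)]
    rw [show (∑ u ∈ Finset.univ, ZV c d u ((Finset.range (L+1)).filter fun j => (!gux j) = u))
        = 1/d + ∑ j ∈ Finset.range L, (d*(1-c))^j from val_Om L]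
    set g : ℝ := d*(1-c) with hgdef
    set T : ℝ := ∑ j ∈ Finset.range L, g^j with hT
    rw [Finset.sum_range_succ]
    -- goal : T + g^L ≤ (1/(c+1/d) + ε) * (1/d + T)
    have hgeom : T * (g - 1) = g^L - 1 := geom_sum_mul g L
    have hT0 : (0:ℝ) ≤ T := Finset.sum_nonneg fun j _ => by positivity
    have hgL0 : (0:ℝ) < g^L := by positivity
    have hdne : d ≠ 0 := ne_of_gt hd0
    have hK1 : 1 ≤ c + 1/d := by
      have : 1/d ≥ 1 - c := by
        rw [ge_iff_le, le_div_iff₀ hd0]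
        linarith [hg1]
      linarith
    have hKpos : (0:ℝ) < c + 1/d := by linarith
    have hLT : (L:ℝ) * g^L ≤ T := by
      have : (L:ℝ) * g^L = ∑ _j ∈ Finset.range L, g^L := by
        rw [Finset.sum_const, Finset.card_range, nsmul_eq_mul]
      rw [this, hT]
      exact Finset.sum_le_sum fun j hj =>
        pow_le_pow_of_le_one (le_of_lt hg) hg1 (le_of_lt (Finset.mem_range.mp hj))
    have hεL : 1 ≤ ε * L := by
      have h1 : (1/ε) ≤ (⌈1/ε⌉₊ : ℝ) := Nat.le_ceil _
      have h2 : ((⌈1/ε⌉₊ : ℕ) : ℝ) ≤ ((L : ℕ) : ℝ) :=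
        Nat.cast_le.mpr (le_max_right _ _)
      have h3 : ε * (1/ε) = 1 := by field_simp
      nlinarith
    have e1 : (c + 1/d) * (T + g^L) = (1/d + T) + c * g^L := by
      field_simp
      nlinarith [hgeom]
    have key : (c + 1/d) * (T + g^L) ≤ (1 + ε*(c+1/d)) * (1/d + T) := by
      rw [e1]
      have step : c * g^L ≤ ε * (c + 1/d) * (1/d + T) := by
        have s1 : c * g^L ≤ (ε * L) * g^L := by nlinarith
        have s2 : (ε * L) * g^L ≤ ε * T := by nlinarith
        have h4 : (1:ℝ)*(1/d + T) ≤ (c+1/d)*(1/d+T) :=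
          mul_le_mul_of_nonneg_right hK1 (by positivity)
        have s3 : ε * T ≤ ε * (c + 1/d) * (1/d + T) := by
          nlinarith [h4, le_of_lt hε, hT0, hd0]
        linarith
      nlinarith
    have h2 : T + g^L ≤ ((1 + ε*(c+1/d))/(c+1/d)) * (1/d + T) := by
      rw [div_mul_eq_mul_div, le_div_iff₀ hKpos]
      nlinarith [key]
    have h3 : (1 + ε*(c+1/d))/(c+1/d) = 1/(c+1/d) + ε := by
      field_simp
    rw [h3] at h2
    exact h2
end

section
/- Let N be a finite ground set, (N, 𝓜) a matroid of rank K, Z a monotone, submodular, normalized set function on N, c ∈ [0,1] a curvature bound for Z, and g a greedy sequence for (Z, 𝓜) with output G, partial outputs G^i, and increments ρ_i = ρ_{g_i}(G^{i−1}). Let Ω be a basis with an enumeration (ω_1, …, ω_K) satisfying, for every i: G^{i−1} ∪ {ω_i} ∈ 𝓜, and ω_i ∈ G ∩ Ω implies ω_i = g_i. Then Z(Ω) ≤ c·Σ_{i : g_i ∈ G ∖ Ω} ρ_i + Σ_{i : g_i ∈ G ∩ Ω} ρ_i + Σ_{i : ω_i ∈ Ω ∖ G} ρ_{ω_i}(G^{i−1}).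 -/
open Finset

/-- With `Ω` a basis ordered against the greedy solution,
`Z(Ω) ≤ c·Σ_{i : g_i ∈ G ∖ Ω} ρ_i + Σ_{i : g_i ∈ G ∩ Ω} ρ_i
  + Σ_{i : ω_i ∈ Ω ∖ G} ρ_{ω_i}(G^{i−1})`. -/
theorem greedy_optimal_decomposition_bound {α : Type*} [DecidableEq α]
    (N : Finset α) (M : Finset α → Prop)
    (hM_ground : ∀ S, M S → S ⊆ N) (hM_empty : M ∅)
    (hM_down : ∀ S T : Finset α, M T → S ⊆ T → M S)
    (hM_aug : ∀ S T : Finset α, M S → M T → S.card < T.card → ∃ x ∈ T \ S, M (insert x S))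
    (K : ℕ) (hK_le : ∀ S, M S → S.card ≤ K) (hK_ex : ∃ B, M B ∧ B.card = K)
    (Z : Finset α → ℝ)
    (hZ_mono : ∀ S T : Finset α, S ⊆ T → T ⊆ N → Z S ≤ Z T)
    (hZ_submod : ∀ S T : Finset α, ∀ x, S ⊆ T → T ⊆ N → x ∈ N → x ∉ T →
      Z (insert x T) - Z T ≤ Z (insert x S) - Z S)
    (hZ_empty : Z ∅ = 0)
    (c : ℝ) (hc0 : 0 ≤ c) (hc1 : c ≤ 1)
    (hcurv : ∀ S ⊆ N, ∀ j ∈ N, j ∉ S → 0 < marg Z j (∅ : Finset α) →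
      (1 - c) * marg Z j (∅ : Finset α) ≤ marg Z j S)
    (g : ℕ → α) (hg_inj : Set.InjOn g (Set.Icc 1 K)) (hG_M : M (initSeg g K))
    (hg_max : ∀ i ∈ Finset.Icc 1 K, ∀ x ∈ N, x ∉ initSeg g (i - 1) →
      M (insert x (initSeg g (i - 1))) →
      marg Z x (initSeg g (i - 1)) ≤ marg Z (g i) (initSeg g (i - 1)))
    (Ω : Finset α) (hΩ_M : M Ω) (hΩ_card : Ω.card = K)
    (ω : ℕ → α) (hω_inj : Set.InjOn ω (Set.Icc 1 K))
    (hω_img : (Finset.Icc 1 K).image ω = Ω)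
    (hω_feas : ∀ i ∈ Finset.Icc 1 K, M (insert (ω i) (initSeg g (i - 1))))
    (hω_int : ∀ i ∈ Finset.Icc 1 K, ω i ∈ initSeg g K → ω i = g i)
 :
    Z Ω ≤ c * (∑ i ∈ (Finset.Icc 1 K).filter fun i => g i ∉ Ω,
        marg Z (g i) (initSeg g (i - 1)))
      + (∑ i ∈ (Finset.Icc 1 K).filter fun i => g i ∈ Ω,
        marg Z (g i) (initSeg g (i - 1)))
      + ∑ i ∈ (Finset.Icc 1 K).filter fun i => ω i ∉ initSeg g K,
        marg Z (ω i) (initSeg g (i - 1)) := by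

  classical
  have hGN : initSeg g K ⊆ N := hM_ground _ hG_M
  have hΩN : Ω ⊆ N := hM_ground _ hΩ_M
  have hseg_mono : ∀ {a b : ℕ}, a ≤ b → initSeg g a ⊆ initSeg g b := by
    intro a b hab
    exact Finset.image_subset_image (Finset.Icc_subset_Icc_right hab)
  have hsegN : ∀ m, m ≤ K → initSeg g m ⊆ N := fun m hm => (hseg_mono hm).trans hGN
  have hgN : ∀ i, 1 ≤ i → i ≤ K → g i ∈ N := by
    intro i h1 h2
    exact hGN (Finset.mem_image_of_mem g (Finset.mem_Icc.mpr ⟨h1, h2⟩))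
  have hωΩ : ∀ i, 1 ≤ i → i ≤ K → ω i ∈ Ω := by
    intro i h1 h2
    rw [← hω_img]
    exact Finset.mem_image_of_mem ω (Finset.mem_Icc.mpr ⟨h1, h2⟩)
  have hseg_succ : ∀ m : ℕ, initSeg g (m+1) = insert (g (m+1)) (initSeg g m) := by
    intro m
    unfold initSeg
    rw [← Finset.insert_Icc_right_eq_Icc_add_one (by omega), Finset.image_insert]
  have hg_notin : ∀ m : ℕ, m + 1 ≤ K → g (m+1) ∉ initSeg g m := by
    intro m hm hmem
    obtain ⟨j, hj, hje⟩ := Finset.mem_image.mp hmem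
    rw [Finset.mem_Icc] at hj
    have := hg_inj ⟨hj.1, by omega⟩ ⟨by omega, hm⟩ hje
    omega
  have hω_notin : ∀ m : ℕ, m + 1 ≤ K → ω (m+1) ∉ (Finset.Icc 1 m).image ω := by
    intro m hm hmem
    obtain ⟨j, hj, hje⟩ := Finset.mem_image.mp hmem
    rw [Finset.mem_Icc] at hj
    have := hω_inj ⟨hj.1, by omega⟩ ⟨by omega, hm⟩ hje
    omega
  -- Lemma A : telescoping
  have hA : ∀ m : ℕ, Z (initSeg g m) = ∑ i ∈ Finset.Icc 1 m, marg Z (g i) (initSeg g (i-1)) := by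
    intro m
    induction m with
    | zero => simp [initSeg, hZ_empty]
    | succ n ih =>
      rw [Finset.sum_Icc_succ_top (by omega : 1 ≤ n+1), ← ih, hseg_succ n]
      simp only [Nat.add_sub_cancel, marg]
      ring
  -- Lemma B : upper bound on Z(G ∪ Ω_m)
  have hB : ∀ m : ℕ, m ≤ K → Z (initSeg g K ∪ (Finset.Icc 1 m).image ω) ≤ Z (initSeg g K) +
      ∑ i ∈ Finset.Icc 1 m, (if ω i ∉ initSeg g K then marg Z (ω i) (initSeg g (i-1)) else 0) := by
    intro m
    induction m with
    | zero => simp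
    | succ n ih =>
      intro hn
      have hn' : n ≤ K := by omega
      have ihn := ih hn'
      have himg : (Finset.Icc 1 (n+1)).image ω
          = insert (ω (n+1)) ((Finset.Icc 1 n).image ω) := by
        rw [← Finset.insert_Icc_right_eq_Icc_add_one (by omega), Finset.image_insert]
      have hTN : initSeg g K ∪ (Finset.Icc 1 n).image ω ⊆ N := by
        apply Finset.union_subset hGN
        intro x hx
        obtain ⟨j, hj, hje⟩ := Finset.mem_image.mp hx
        rw [Finset.mem_Icc] at hj
        exact hΩN (hje ▸ hωΩ j hj.1 (by omega))
      rw [Finset.sum_Icc_succ_top (by omega : 1 ≤ n+1), himg, Finset.union_insert]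
      by_cases hω1 : ω (n+1) ∈ initSeg g K
      · rw [Finset.insert_eq_self.mpr (Finset.mem_union_left _ hω1)]
        simp only [hω1, not_true_eq_false, if_false]
        linarith
      · have hxT : ω (n+1) ∉ initSeg g K ∪ (Finset.Icc 1 n).image ω := by
          simp only [Finset.mem_union, not_or]
          exact ⟨hω1, hω_notin n hn⟩
        have hxN : ω (n+1) ∈ N := hΩN (hωΩ (n+1) (by omega) hn)
        have hsub := hZ_submod (initSeg g n) (initSeg g K ∪ (Finset.Icc 1 n).image ω)
          (ω (n+1)) ((hseg_mono hn').trans Finset.subset_union_left) hTN hxN hxT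
        simp only [hω1, not_false_eq_true, if_true, Nat.add_sub_cancel, marg] at *
        linarith
  -- Lemma C : lower bound on Z(Ω ∪ G_m)
  have hC : ∀ m : ℕ, m ≤ K →
      Z Ω + (1-c) * ∑ i ∈ Finset.Icc 1 m, (if g i ∉ Ω then marg Z (g i) (initSeg g (i-1)) else 0)
        ≤ Z (Ω ∪ initSeg g m) := by
    intro m
    induction m with
    | zero => simp [initSeg]
    | succ n ih =>
      intro hn
      have hn' : n ≤ K := by omega
      have ihn := ih hn'
      have hTN : Ω ∪ initSeg g n ⊆ N := Finset.union_subset hΩN (hsegN n hn')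
      rw [Finset.sum_Icc_succ_top (by omega : 1 ≤ n+1), hseg_succ n, Finset.union_insert]
      by_cases hgΩ : g (n+1) ∈ Ω
      · rw [Finset.insert_eq_self.mpr (Finset.mem_union_left _ hgΩ)]
        simp only [hgΩ, not_true_eq_false, if_false]
        linarith
      · have hxT : g (n+1) ∉ Ω ∪ initSeg g n := by
          simp only [Finset.mem_union, not_or]
          exact ⟨hgΩ, hg_notin n hn⟩
        have hxN : g (n+1) ∈ N := hgN (n+1) (by omega) hn
        have hmono' : marg Z (g (n+1)) (initSeg g n) ≤ marg Z (g (n+1)) ∅ := by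
          have := hZ_submod ∅ (initSeg g n) (g (n+1)) (Finset.empty_subset _)
            (hsegN n hn') hxN (hg_notin n hn)
          simpa [marg] using this
        have hkey : (1-c) * marg Z (g (n+1)) (initSeg g n)
            ≤ Z (insert (g (n+1)) (Ω ∪ initSeg g n)) - Z (Ω ∪ initSeg g n) := by
          by_cases hpos : 0 < marg Z (g (n+1)) (∅ : Finset α)
          · have h1 := hcurv (Ω ∪ initSeg g n) hTN (g (n+1)) hxN hxT hpos
            have h2 : (1-c) * marg Z (g (n+1)) (initSeg g n)
                ≤ (1-c) * marg Z (g (n+1)) ∅ :=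
              mul_le_mul_of_nonneg_left hmono' (by linarith)
            simp only [marg] at h1 h2 ⊢
            linarith
          · push_neg at hpos
            have h0 : Z (Ω ∪ initSeg g n) ≤ Z (insert (g (n+1)) (Ω ∪ initSeg g n)) :=
              hZ_mono _ _ (Finset.subset_insert _ _) (Finset.insert_subset hxN hTN)
            nlinarith
        simp only [hgΩ, not_false_eq_true, if_true, Nat.add_sub_cancel, mul_add]
        linarith
  -- Assemble
  have hBK := hB K le_rfl
  rw [hω_img] at hBK
  have hCK := hC K le_rfl
  rw [Finset.union_comm] at hCK
  have hZG := hA K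
  have hsplit := Finset.sum_filter_add_sum_filter_not (Finset.Icc 1 K)
    (fun i => g i ∈ Ω) (fun i => marg Z (g i) (initSeg g (i-1)))
  rw [← Finset.sum_filter] at hBK
  rw [← Finset.sum_filter] at hCK
  set Sin := ∑ i ∈ (Finset.Icc 1 K).filter fun i => g i ∈ Ω,
      marg Z (g i) (initSeg g (i-1)) with hSin
  set Sout := ∑ i ∈ (Finset.Icc 1 K).filter fun i => g i ∉ Ω,
      marg Z (g i) (initSeg g (i-1)) with hSout
  set Sw := ∑ i ∈ (Finset.Icc 1 K).filter fun i => ω i ∉ initSeg g K,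
      marg Z (ω i) (initSeg g (i-1)) with hSw
  have hexp : (1-c) * Sout = Sout - c * Sout := by ring
  linarith [hBK, hCK, hZG, hsplit]
end
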